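/- arXiv:2305.13505 — 4 statements merged into one kernel-verified Lean document; each statement's English description precedes it below -/
import Mathlib

section
/- Let (e_n) be the standard unit vector basis of c₀ and let E be a separable complete metric space. Then either c₀ coarsely embeds into E, or the relation < is well-founded on Coa(ℤ,(e_n),E) and rk(Coa(ℤ,(e_n),E), <) is a countable ordinal. -/
open Filter Set Topology
open scoped ENNReal

noncomputable section

/-! ### Metric notions of embeddability -/

/-- A coarse embedding between (pseudo)metric spaces. -/
def CoarseEmbeddingMap {X E : Type*} [PseudoMetricSpace X] [PseudoMetricSpace E]
    (f : X → E) : Prop :=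
  ∃ κ ω : ℝ → ℝ,
    MonotoneOn κ (Set.Ici 0) ∧ MonotoneOn ω (Set.Ici 0) ∧
    (∀ t : ℝ, 0 ≤ t → 0 ≤ κ t ∧ 0 ≤ ω t) ∧
    Filter.Tendsto κ Filter.atTop Filter.atTop ∧
    ∀ x y : X, κ (dist x y) ≤ dist (f x) (f y) ∧ dist (f x) (f y) ≤ ω (dist x y)

/-- A uniform embedding between (pseudo)metric spaces. -/
def UniformEmbeddingMapNL {X E : Type*} [PseudoMetricSpace X] [PseudoMetricSpace E]
    (f : X → E) : Prop :=
  ∃ κ ω : ℝ → ℝ,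
    MonotoneOn κ (Set.Ici 0) ∧ MonotoneOn ω (Set.Ici 0) ∧
    (∀ t : ℝ, 0 ≤ t → 0 ≤ κ t ∧ 0 ≤ ω t) ∧
    (∀ t : ℝ, 0 < t → 0 < κ t) ∧
    Filter.Tendsto ω (nhdsWithin 0 (Set.Ioi 0)) (nhds 0) ∧
    ∀ x y : X, κ (dist x y) ≤ dist (f x) (f y) ∧ dist (f x) (f y) ≤ ω (dist x y)

/-- A bi-Lipschitz embedding between (pseudo)metric spaces. -/
def BiLipschitzEmbeddingMap {X E : Type*} [PseudoMetricSpace X] [PseudoMetricSpace E]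
    (f : X → E) : Prop :=
  ∃ c C : ℝ, 0 < c ∧ c ≤ C ∧
    ∀ x y : X, c * dist x y ≤ dist (f x) (f y) ∧ dist (f x) (f y) ≤ C * dist x y

/-! ### The set `𝒵`, functional moduli and the classes `M_coarse`, `M_uniform`, `M_Lipschitz` -/

/-- The set `𝒵 = {…,1/3,1/2,1,2,3,…} ⊆ (0,∞)`. -/
def Zset : Set ℝ := {r | ∃ n : ℕ, 1 ≤ n ∧ (r = n ∨ r = 1 / n)}

/-- Membership in `𝒩`: a non-decreasing `[0,∞]`-valued modulus on `𝒵` (values outside of `𝒵`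
are irrelevant dummy values). -/
def Nmod (κ : ℝ → ℝ≥0∞) : Prop := MonotoneOn κ Zset

/-- `t₋`: the largest element of `𝒵` below a real `t > 0`. -/
def tminus (t : ℝ) : ℝ := if 1 ≤ t then (⌊t⌋ : ℝ) else 1 / (⌈1 / t⌉ : ℝ)

/-- `t₊`: the smallest element of `𝒵` above a real `t > 0`. -/
def tplus (t : ℝ) : ℝ := if 1 ≤ t then (⌈t⌉ : ℝ) else 1 / (⌊1 / t⌋ : ℝ)

/-- The pair `(κ, ω)` belongs to `M_coarse`. -/
def Mcoarse (κ ω : ℝ → ℝ≥0∞) : Prop :=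
  (∀ r ∈ Zset, ω r < ⊤) ∧ Filter.Tendsto (fun n : ℕ => κ n) Filter.atTop (nhds ⊤)

/-- The pair `(κ, ω)` belongs to `M_uniform`. -/
def Muniform (κ ω : ℝ → ℝ≥0∞) : Prop :=
  (∀ r ∈ Zset, 0 < κ r) ∧
    Filter.Tendsto (fun n : ℕ => ω (1 / (n + 1 : ℝ))) Filter.atTop (nhds 0)

/-- The pair `(κ, ω)` belongs to `M_Lipschitz`. -/
def MLipschitz (κ ω : ℝ → ℝ≥0∞) : Prop :=
  ∃ c C : ℝ, 0 < c ∧ c < C ∧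
    ∀ r ∈ Zset, ENNReal.ofReal (c * r) ≤ κ r ∧ ω r ≤ ENNReal.ofReal (C * r)

/-! ### Ill-foundedness and ranks of binary relations restricted to subsets -/

/-- The relation `r` is ill-founded on the subset `S`. -/
def IllFoundedOn {A : Type*} (r : A → A → Prop) (S : Set A) : Prop :=
  ∃ a : ℕ → A, (∀ n, a n ∈ S) ∧ ∀ n, r (a (n + 1)) (a n)

/-- The rank `rk(S, r)` of a relation `r`, well-founded on a subset `S`. -/
def relRankOn {A : Type*} (r : A → A → Prop) (S : Set A)
    (h : WellFounded fun a b : S => r a b) : Ordinal :=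
  ⨆ a : S, Order.succ (h.apply a).rank

/-! ### The simple embeddability ranks -/

/-- A quadruple `(κ, ω, k, φ)` as in the definition of `Ω(D,E)`; the countable dense set `D` is
given by an enumeration `x : ℕ → X` and `φ : D → E` is represented by the map on indices. -/
structure Quad (E : Type*) where
  kappa : ℝ → ℝ≥0∞
  omega : ℝ → ℝ≥0∞
  k : ℕ
  phi : ℕ → E

/-- The set `Ω(D,E)` where `D` is enumerated by `x : ℕ → X`. -/
def OmegaSet {X E : Type*} [MetricSpace X] [MetricSpace E] (x : ℕ → X) : Set (Quad E) :=
  {q | Nmod q.kappa ∧ Nmod q.omega ∧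
    (∀ i j : ℕ, x i = x j → q.phi i = q.phi j) ∧
    ∀ i < q.k, ∀ j < q.k, x i ≠ x j →
      q.kappa (tminus (dist (x i) (x j))) ≤ edist (q.phi i) (q.phi j) ∧
      edist (q.phi i) (q.phi j) ≤ q.omega (tplus (dist (x i) (x j)))}

/-- The set `Coa(D,E)`. -/
def CoaSet {X E : Type*} [MetricSpace X] [MetricSpace E] (x : ℕ → X) : Set (Quad E) :=
  {q ∈ OmegaSet x | Mcoarse q.kappa q.omega}

/-- The set `Uni(D,E)`. -/
def UniSet {X E : Type*} [MetricSpace X] [MetricSpace E] (x : ℕ → X) : Set (Quad E) :=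
  {q ∈ OmegaSet x | Muniform q.kappa q.omega}

/-- The set `Lip(D,E)`. -/
def LipSet {X E : Type*} [MetricSpace X] [MetricSpace E] (x : ℕ → X) : Set (Quad E) :=
  {q ∈ OmegaSet x | MLipschitz q.kappa q.omega}

/-- The relation `<` on `Ω(D,E)`. -/
def QuadRel {E : Type*} (p q : Quad E) : Prop :=
  p.kappa = q.kappa ∧ p.omega = q.omega ∧ p.k = q.k + 1 ∧ ∀ i < q.k, p.phi i = q.phi i

/-! ### Embeddability ranks based on Schauder bases -/

/-- The copy of `ℤ` inside `ℝ`. -/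
def ZR : Set ℝ := Set.range ((↑) : ℤ → ℝ)

/-- The copy of `ℚ` inside `ℝ`. -/
def QR : Set ℝ := Set.range ((↑) : ℚ → ℝ)

/-- `R[A]`: the set of `R`-linear combinations of the vectors `e i`, `i ∈ A`. -/
def RComb {X : Type*} [NormedAddCommGroup X] [Module ℝ X] (R : Set ℝ) (e : ℕ → X)
    (A : Finset ℕ) : Set X :=
  {x | ∃ c : ℕ → ℝ, (∀ i, c i ∈ R) ∧ x = ∑ i ∈ A, c i • e i}

/-- `R[e₁,e₂,…]`: the set of all finite `R`-linear combinations of the vectors `e i`. -/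
def RCombAll {X : Type*} [NormedAddCommGroup X] [Module ℝ X] (R : Set ℝ) (e : ℕ → X) : Set X :=
  ⋃ A : Finset ℕ, RComb R e A

/-- `A ≺* B` for finite subsets of `ℕ`: `A` is obtained from `B` by adding one element larger
than all elements of `B`. -/
def PrecStar (A B : Finset ℕ) : Prop := ∃ m : ℕ, (∀ b ∈ B, b < m) ∧ A = insert m B

/-- A quadruple `(κ, ω, A, φ)` as in the definition of `Θ(R,(eₙ),E)`; the finite subset `A` of
`{e₁,e₂,…}` is recorded by the finite set of indices, and `φ` (a map on `R[e₁,e₂,…]`) is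
represented by a map on `X` (only its values on `R`-linear combinations are ever relevant). -/
structure QuadF (X E : Type*) where
  kappa : ℝ → ℝ≥0∞
  omega : ℝ → ℝ≥0∞
  A : Finset ℕ
  phi : X → E

/-- The set `Θ(R,(eₙ),E)`. -/
def ThetaSet {X E : Type*} [NormedAddCommGroup X] [Module ℝ X] [MetricSpace E]
    (R : Set ℝ) (e : ℕ → X) : Set (QuadF X E) :=
  {q | Nmod q.kappa ∧ Nmod q.omega ∧
    ∀ x ∈ RComb R e q.A, ∀ y ∈ RComb R e q.A, x ≠ y →
      q.kappa (tminus (dist x y)) ≤ edist (q.phi x) (q.phi y) ∧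
      edist (q.phi x) (q.phi y) ≤ q.omega (tplus (dist x y))}

/-- The set `Coa(R,(eₙ),E)`. -/
def CoaTheta {X E : Type*} [NormedAddCommGroup X] [Module ℝ X] [MetricSpace E]
    (R : Set ℝ) (e : ℕ → X) : Set (QuadF X E) :=
  {q ∈ ThetaSet R e | Mcoarse q.kappa q.omega}

/-- The set `Uni(R,(eₙ),E)`. -/
def UniTheta {X E : Type*} [NormedAddCommGroup X] [Module ℝ X] [MetricSpace E]
    (R : Set ℝ) (e : ℕ → X) : Set (QuadF X E) :=
  {q ∈ ThetaSet R e | Muniform q.kappa q.omega}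

/-- The set `Lip(R,(eₙ),E)`. -/
def LipTheta {X E : Type*} [NormedAddCommGroup X] [Module ℝ X] [MetricSpace E]
    (R : Set ℝ) (e : ℕ → X) : Set (QuadF X E) :=
  {q ∈ ThetaSet R e | MLipschitz q.kappa q.omega}

/-- The relation `<` on `Θ(R,(eₙ),E)`. -/
def QuadFRel {X E : Type*} [NormedAddCommGroup X] [Module ℝ X]
    (R : Set ℝ) (e : ℕ → X) (p q : QuadF X E) : Prop :=
  p.kappa = q.kappa ∧ p.omega = q.omega ∧ PrecStar p.A q.A ∧
    ∀ x ∈ RComb R e q.A, p.phi x = q.phi x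

/-! ### Schauder bases, basic sequences, subsymmetric bases -/

/-- `(eₙ)` is a Schauder basis of the subset `S`: every element of `S` has a unique
norm-convergent expansion. -/
def IsSchauderBasisOf {X : Type*} [NormedAddCommGroup X] [Module ℝ X] (e : ℕ → X)
    (S : Set X) : Prop :=
  ∀ x ∈ S, ∃! a : ℕ → ℝ,
    Filter.Tendsto (fun N => ∑ i ∈ Finset.range N, a i • e i) Filter.atTop (nhds x)

/-- `(eₙ)` is a Schauder basis of the whole space `X`. -/
def IsSchauderBasis {X : Type*} [NormedAddCommGroup X] [Module ℝ X] (e : ℕ → X) : Prop :=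
  IsSchauderBasisOf e Set.univ

/-- `(eₙ)` is a basic sequence: it is a Schauder basis of its closed linear span. -/
def IsBasicSequence {X : Type*} [NormedAddCommGroup X] [Module ℝ X] (e : ℕ → X) : Prop :=
  IsSchauderBasisOf e (closure (Submodule.span ℝ (Set.range e) : Set X))

/-- `(eₙ)` is a subsymmetric basic sequence. -/
def IsSubsymmetric {X : Type*} [NormedAddCommGroup X] [Module ℝ X] (e : ℕ → X) : Prop :=
  IsBasicSequence e ∧ ∃ C : ℝ, 1 ≤ C ∧ ∀ n : ℕ → ℕ, StrictMono n →
    ∀ s : Finset ℕ, ∀ a : ℕ → ℝ,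
      C⁻¹ * ‖∑ k ∈ s, a k • e k‖ ≤ ‖∑ k ∈ s, a k • e (n k)‖ ∧
      ‖∑ k ∈ s, a k • e (n k)‖ ≤ C * ‖∑ k ∈ s, a k • e k‖

/-! ### Schreier families -/

/-- `n ≤ A`: either `A = ∅` or `n ≤ min A`. -/
def natLE (n : ℕ) (A : Finset ℕ) : Prop := ∀ a ∈ A, n ≤ a

/-- `A < B`: either one is empty or `max A < min B`. -/
def finLT (A B : Finset ℕ) : Prop := ∀ a ∈ A, ∀ b ∈ B, a < b

/-- The Schreier families `S_α`, relative to a fixed assignment `lseq` of fundamental sequences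
to (countable) limit ordinals; here `lseq l n` denotes `λ_{n+1}` in 1-based notation. -/
def Schreier (lseq : Ordinal → ℕ → Ordinal) (α : Ordinal) : Set (Finset ℕ) :=
  Ordinal.limitRecOn α
    ({A | ∃ n : ℕ, 1 ≤ n ∧ A = {n}} ∪ {∅})
    (fun _ S => {A | ∃ n : ℕ, 1 ≤ n ∧ ∃ f : ℕ → Finset ℕ,
      (∀ i < n, f i ∈ S) ∧ natLE n (f 0) ∧
      (∀ i j : ℕ, i < j → j < n → finLT (f i) (f j)) ∧
      A = (Finset.range n).biUnion f})
    (fun o _ ih => {A | ∃ n : ℕ, natLE (n + 1) A ∧ ∃ h : lseq o n < o, A ∈ ih (lseq o n) h})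

/-- `lseq` is a legitimate assignment of fundamental sequences: to every countable limit
ordinal `l` it assigns a strictly increasing sequence of smaller ordinals with supremum `l`. -/
def IsFundSeq (lseq : Ordinal → ℕ → Ordinal) : Prop :=
  ∀ l : Ordinal, Order.IsSuccLimit l → l < (Cardinal.aleph 1).ord →
    StrictMono (lseq l) ∧ (∀ n, lseq l n < l) ∧ (⨆ n, lseq l n) = l

/-! ### The space `c₀` and `Z[S_α]_{c₀}` -/

/-- The Banach space `c₀` of real sequences vanishing at infinity, with the sup norm. -/
abbrev c0 : Type := ZeroAtInftyContinuousMap ℕ ℝ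

/-- The standard unit vector basis of `c₀`. -/
def stdBasis (n : ℕ) : c0 :=
  { toFun := fun m => if m = n then (1 : ℝ) else 0
    continuous_toFun := continuous_of_discreteTopology
    zero_at_infty' := by
      refine Filter.Tendsto.mono_left ?_ Filter.cocompact_le_cofinite
      refine tendsto_nhds_of_eventually_eq ?_
      refine Filter.eventually_cofinite.mpr (Set.Finite.subset (Set.finite_singleton n) ?_)
      intro m hm
      by_contra h
      exact hm (if_neg h) }

/-- The metric space `Z[S_α]_{c₀}` (as a subset of `c₀`). -/
def ZSchreierSet (lseq : Ordinal → ℕ → Ordinal) (α : Ordinal) : Set c0 :=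
  {x | ∃ A ∈ Schreier lseq α, ∃ t : ℕ → ℤ, x = ∑ i ∈ A, (t i : ℝ) • stdBasis i}

/-! ### Eventual domination -/

/-- The family `F ⊆ ℕ^ℕ` is bounded with respect to eventual domination. -/
def EvDomBounded (F : Set (ℕ → ℕ)) : Prop :=
  ∃ g : ℕ → ℕ, ∀ f ∈ F, ∀ᶠ m in Filter.atTop, f m < g m

end

noncomputable section
namespace S15

lemma c0_apply_le_norm (x : c0) (n : ℕ) : |x n| ≤ ‖x‖ := by
  rw [← ZeroAtInftyContinuousMap.norm_toBCF_eq_norm]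
  exact x.toBCF.norm_coe_le_norm n

lemma c0_norm_le (x : c0) {C : ℝ} (hC : 0 ≤ C) (h : ∀ n, |x n| ≤ C) : ‖x‖ ≤ C := by
  rw [← ZeroAtInftyContinuousMap.norm_toBCF_eq_norm]
  exact (BoundedContinuousFunction.norm_le hC).2 h

lemma c0_sum_apply (S : Finset ℕ) (f : ℕ → c0) (j : ℕ) :
    (∑ i ∈ S, f i) j = ∑ i ∈ S, f i j := by
  classical
  induction S using Finset.induction with
  | empty => rfl
  | insert _ _ hne ih =>
      rw [Finset.sum_insert hne, Finset.sum_insert hne, ← ih]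
      rfl

lemma stdBasis_apply (i j : ℕ) : stdBasis i j = if j = i then 1 else 0 := rfl

lemma comb_apply (S : Finset ℕ) (c : ℕ → ℝ) (j : ℕ) :
    (∑ i ∈ S, c i • stdBasis i) j = if j ∈ S then c j else 0 := by
  classical
  rw [c0_sum_apply]
  have : ∀ i ∈ S, (c i • stdBasis i) j = if i = j then c j else 0 := by
    intro i _
    rw [ZeroAtInftyContinuousMap.coe_smul]
    rcases eq_or_ne i j with rfl | hij
    · simp [stdBasis_apply]
    · simp [stdBasis_apply, if_neg (Ne.symm hij), hij]
  rw [Finset.sum_congr rfl this, Finset.sum_ite_eq' S j (fun _ => c j)]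

end S15
namespace S15

/-- Vector associated to an integer finsupp. -/
def toVec (c : ℕ →₀ ℤ) : c0 := ∑ i ∈ c.support, ((c i : ℝ)) • stdBasis i

lemma toVec_apply (c : ℕ →₀ ℤ) (j : ℕ) : toVec c j = (c j : ℝ) := by
  rw [toVec, comb_apply]
  split_ifs with h
  · rfl
  · simp [Finsupp.notMem_support_iff.1 h]

lemma toVec_inj {c c' : ℕ →₀ ℤ} (h : toVec c = toVec c') : c = c' := by
  ext j
  have := congrArg (fun z : c0 => z j) h
  simp only [toVec_apply] at this
  exact_mod_cast this

lemma toVec_mem {A : Finset ℕ} {c : ℕ →₀ ℤ} (h : ∀ i, i ∉ A → c i = 0) :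
    toVec c ∈ RComb ZR stdBasis A := by
  refine ⟨fun i => ((c i : ℤ) : ℝ), fun i => ⟨c i, rfl⟩, ?_⟩
  rw [toVec]
  refine (Finset.sum_subset ?_ ?_)
  · intro i hi
    by_contra hA
    exact (Finsupp.mem_support_iff.1 hi) (h i hA)
  · intro i _ hi
    simp [Finsupp.notMem_support_iff.1 hi]

lemma dist_toVec_coord (c c' : ℕ →₀ ℤ) (j : ℕ) :
    |(c j : ℝ) - (c' j : ℝ)| ≤ dist (toVec c) (toVec c') := by
  rw [dist_eq_norm]
  have : (toVec c - toVec c') j = (c j : ℝ) - (c' j : ℝ) := by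
    rw [ZeroAtInftyContinuousMap.coe_sub]
    simp [toVec_apply]
  rw [← this]
  exact c0_apply_le_norm _ j

lemma one_le_dist_toVec {c c' : ℕ →₀ ℤ} (h : c ≠ c') :
    1 ≤ dist (toVec c) (toVec c') := by
  obtain ⟨j, hj⟩ : ∃ j, c j ≠ c' j := by
    by_contra hc; push_neg at hc; exact h (Finsupp.ext hc)
  refine le_trans ?_ (dist_toVec_coord c c' j)
  have h1 : (1 : ℤ) ≤ |c j - c' j| := Int.one_le_abs (sub_ne_zero.2 hj)
  have h2 : |(c j : ℝ) - (c' j : ℝ)| = ((|c j - c' j| : ℤ) : ℝ) := by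
    push_cast
    rfl
  rw [h2]; exact_mod_cast h1

end S15

namespace S15

lemma natCast_mem_Zset {n : ℕ} (h : 1 ≤ n) : (n : ℝ) ∈ Zset :=
  ⟨n, h, Or.inl rfl⟩

lemma tminus_eq {t : ℝ} (h : 1 ≤ t) : tminus t = ((⌊t⌋₊ : ℕ) : ℝ) := by
  rw [tminus, if_pos h]
  norm_cast
  rw [← Int.floor_toNat]
  exact (Int.toNat_of_nonneg (Int.floor_nonneg.2 (le_trans zero_le_one h))).symm

lemma tplus_eq {t : ℝ} (h : 1 ≤ t) : tplus t = ((⌈t⌉₊ : ℕ) : ℝ) := by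
  rw [tplus, if_pos h]
  norm_cast
  rw [← Int.ceil_toNat]
  exact (Int.toNat_of_nonneg (Int.ceil_nonneg (le_trans zero_le_one h))).symm

lemma one_le_natFloor {t : ℝ} (h : 1 ≤ t) : 1 ≤ ⌊t⌋₊ := Nat.le_floor (by exact_mod_cast h)

lemma one_le_natCeil {t : ℝ} (h : 1 ≤ t) : 1 ≤ ⌈t⌉₊ := le_trans (one_le_natFloor h) (Nat.floor_le_ceil t)

/-! ### Code entries -/

def Kent (κ : ℝ → ℝ≥0∞) (k j : ℕ) : ℕ := ⌊(min (κ j) k).toReal⌋₊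

def Went (ω : ℝ → ℝ≥0∞) (j : ℕ) : ℕ := ⌈(ω j).toReal⌉₊

open Classical in
def Jent (κ : ℝ → ℝ≥0∞) (M : ℕ) : ℕ :=
  if h : ∃ j : ℕ, ∀ r : ℕ, j ≤ r → (M : ℝ≥0∞) ≤ κ r then Nat.find h else 0

def Cfs (A : Finset ℕ) (k : ℕ) : Finset (ℕ →₀ ℤ) :=
  Finset.Icc (Finsupp.indicator A fun _ _ => -(k : ℤ)) (Finsupp.indicator A fun _ _ => (k : ℤ))

lemma mem_Cfs {A : Finset ℕ} {k : ℕ} {c : ℕ →₀ ℤ} :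
    c ∈ Cfs A k ↔ (∀ i, i ∉ A → c i = 0) ∧ ∀ i, |c i| ≤ (k : ℤ) := by
  classical
  rw [Cfs, Finset.mem_Icc, Finsupp.le_def, Finsupp.le_def]
  constructor
  · rintro ⟨h1, h2⟩
    constructor
    · intro i hi
      have e1 := h1 i; have e2 := h2 i
      rw [Finsupp.indicator_apply, dif_neg hi] at e1
      rw [Finsupp.indicator_apply, dif_neg hi] at e2
      omega
    · intro i
      have e1 := h1 i; have e2 := h2 i
      rw [Finsupp.indicator_apply] at e1
      rw [Finsupp.indicator_apply] at e2
      by_cases hi : i ∈ A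
      · rw [dif_pos hi] at e1 e2; rw [abs_le]; exact ⟨e1, e2⟩
      · rw [dif_neg hi] at e1; rw [dif_neg hi] at e2
        rw [abs_le]; constructor <;> omega
  · rintro ⟨h1, h2⟩
    constructor
    · intro i
      rw [Finsupp.indicator_apply]
      by_cases hi : i ∈ A
      · rw [dif_pos hi]; exact (abs_le.1 (h2 i)).1
      · rw [dif_neg hi, h1 i hi]
    · intro i
      rw [Finsupp.indicator_apply]
      by_cases hi : i ∈ A
      · rw [dif_pos hi]; exact (abs_le.1 (h2 i)).2
      · rw [dif_neg hi, h1 i hi]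

lemma Cfs_mono {A A' : Finset ℕ} {k k' : ℕ} (hA : A ⊆ A') (hk : k ≤ k') :
    Cfs A k ⊆ Cfs A' k' := by
  intro c hc
  rw [mem_Cfs] at hc ⊢
  refine ⟨fun i hi => hc.1 i (fun hmem => hi (hA hmem)), fun i => le_trans (hc.2 i) (by exact_mod_cast hk)⟩

open Classical in
def napprox {E : Type*} [MetricSpace E] (d : ℕ → E) (φ : c0 → E) (x : c0) : ℕ :=
  if h : ∃ n, dist (φ x) (d n) < 1 then Nat.find h else 0

lemma napprox_spec {E : Type*} [MetricSpace E] {d : ℕ → E} (hd : DenseRange d)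
    (φ : c0 → E) (x : c0) : dist (φ x) (d (napprox d φ x)) < 1 := by
  classical
  have h : ∃ n, dist (φ x) (d n) < 1 :=
    (Metric.denseRange_iff.1 hd) (φ x) 1 one_pos
  rw [napprox, dif_pos h]
  exact Nat.find_spec h

/-! ### Codes -/

structure Code where
  A : Finset ℕ
  psi : Finset ((ℕ →₀ ℤ) × ℕ)
  Kl : List ℕ
  Wl : List ℕ
  Jl : List ℕ

instance : Countable Code :=
  Countable.of_equiv (Finset ℕ × Finset ((ℕ →₀ ℤ) × ℕ) × List ℕ × List ℕ × List ℕ)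
    { toFun := fun x => ⟨x.1, x.2.1, x.2.2.1, x.2.2.2.1, x.2.2.2.2⟩
      invFun := fun c => ⟨c.A, c.psi, c.Kl, c.Wl, c.Jl⟩
      left_inv := fun _ => rfl
      right_inv := fun _ => rfl }

def codeOf {E : Type*} [MetricSpace E] (d : ℕ → E) (q : QuadF c0 E) : Code where
  A := q.A
  psi := (Cfs q.A q.A.card).image (fun c => (c, napprox d q.phi (toVec c)))
  Kl := (List.range (q.A.card + 1)).map (Kent q.kappa q.A.card)
  Wl := (List.range (q.A.card + 1)).map (Went q.omega)
  Jl := (List.range (q.A.card + 1)).map (Jent q.kappa)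

def CodeRel {E : Type*} [MetricSpace E] (d : ℕ → E) (b' b : Code) : Prop :=
  ∃ pp qq : QuadF c0 E, pp ∈ CoaTheta ZR stdBasis ∧ qq ∈ CoaTheta ZR stdBasis ∧
    QuadFRel ZR stdBasis pp qq ∧ codeOf d pp = b' ∧ codeOf d qq = b

end S15

namespace S15

lemma exists_descending_of_not_wf {α : Type*} {r : α → α → Prop} (h : ¬ WellFounded r) :
    ∃ f : ℕ → α, ∀ n, r (f (n + 1)) (f n) := by
  classical
  have hex : ∃ a, ¬ Acc r a := by
    by_contra h'
    push_neg at h'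
    exact h ⟨h'⟩
  have step : ∀ x : {x : α // ¬ Acc r x}, ∃ y : {x : α // ¬ Acc r x}, r y.1 x.1 := by
    rintro ⟨x, hx⟩
    by_contra h'
    push_neg at h'
    refine hx (Acc.intro x fun y hy => ?_)
    by_contra hny
    exact h' ⟨y, hny⟩ hy
  choose nxt hnxt using step
  obtain ⟨a, ha⟩ := hex
  let g : ℕ → {x : α // ¬ Acc r x} := fun n => Nat.rec ⟨a, ha⟩ (fun _ x => nxt x) n
  exact ⟨fun n => (g n).1, fun n => hnxt (g n)⟩

lemma acc_rank_le_of_map {α β : Type u} {r : α → α → Prop} {s : β → β → Prop} (G : α → β)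
    (hmap : ∀ a a', r a a' → s (G a) (G a')) (hs : WellFounded s) :
    ∀ b, ∀ a, G a = b → ∀ (ha : Acc r a), ha.rank ≤ (hs.apply b).rank := by
  intro b
  induction b using WellFounded.induction hs with
  | _ b IH =>
    intro a hab ha
    rw [Acc.rank_eq]
    refine Ordinal.iSup_le ?_
    rintro ⟨a', ha'⟩
    have hs' : s (G a') b := hab ▸ hmap a' a ha'
    have h1 : (ha.inv ha').rank ≤ (hs.apply (G a')).rank := IH (G a') hs' a' rfl _
    have h2 : (hs.apply (G a')).rank = ((hs.apply b).inv hs').rank := rfl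
    calc Order.succ (ha.inv ha').rank ≤ Order.succ ((hs.apply b).inv hs').rank := by
          rw [← h2]; exact Order.succ_le_succ h1
      _ ≤ (hs.apply b).rank := by
          conv_rhs => rw [Acc.rank_eq]
          exact Ordinal.le_iSup (fun b' : {b' // s b' b} => Order.succ ((hs.apply b).inv b'.2).rank) ⟨G a', hs'⟩

lemma rank_lt_omega1 {β : Type u} [Countable β] {s : β → β → Prop} (hs : WellFounded s) :
    ∀ b, (hs.apply b).rank < (Cardinal.aleph 1).ord := by
  intro b
  induction b using WellFounded.induction hs with
  | _ b IH =>
    rw [Acc.rank_eq]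
    refine Ordinal.iSup_lt_ord_lift ?_ ?_
    · rw [Cardinal.isRegular_aleph_one.cof_eq]
      refine lt_of_le_of_lt (Cardinal.lift_le.2 (Cardinal.mk_le_aleph0 (α := {b' // s b' b}))) ?_
      rw [Cardinal.lift_aleph0]
      exact Cardinal.aleph0_lt_aleph_one
    · rintro ⟨b', hb'⟩
      have h1 : ((hs.apply b).inv hb').rank = (hs.apply b').rank := rfl
      rw [h1]
      exact (Cardinal.isSuccLimit_ord (Cardinal.aleph0_le_aleph 1)).succ_lt (IH b' hb')

lemma rank_sup_lt_omega1 {β : Type u} [Countable β] {s : β → β → Prop} (hs : WellFounded s) :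
    (⨆ b : β, Order.succ (hs.apply b).rank) < (Cardinal.aleph 1).ord := by
  refine Ordinal.iSup_lt_ord_lift ?_ ?_
  · rw [Cardinal.isRegular_aleph_one.cof_eq]
    refine lt_of_le_of_lt (Cardinal.lift_le.2 (Cardinal.mk_le_aleph0 (α := β))) ?_
    rw [Cardinal.lift_aleph0]
    exact Cardinal.aleph0_lt_aleph_one
  · intro b
    exact (Cardinal.isSuccLimit_ord (Cardinal.aleph0_le_aleph 1)).succ_lt (rank_lt_omega1 hs b)

end S15

namespace S15
section Chain
variable {E : Type*} [MetricSpace E]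

/-- Consolidated facts about one step of the chain. -/
def Step (d : ℕ → E) (q : ℕ → QuadF c0 E) (m : ℕ → ℕ) (n : ℕ) : Prop :=
  ((q (n + 1)).A = insert (m n) (q n).A) ∧ (∀ a ∈ (q n).A, a < m n) ∧
  ((q (n + 1)).A.card = (q n).A.card + 1) ∧
  (∀ c ∈ Cfs (q n).A (q n).A.card,
    napprox d (q (n + 1)).phi (toVec c) = napprox d (q n).phi (toVec c)) ∧
  (∀ j ≤ (q n).A.card + 1,
    Kent (q (n + 1)).kappa ((q n).A.card + 1) j = Kent (q n).kappa ((q n).A.card + 1) j) ∧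
  (∀ j ≤ (q n).A.card + 1, Went (q (n + 1)).omega j = Went (q n).omega j) ∧
  (∀ j ≤ (q n).A.card + 1, Jent (q (n + 1)).kappa j = Jent (q n).kappa j)

variable {d : ℕ → E} {q : ℕ → QuadF c0 E} {m : ℕ → ℕ}

lemma card_add (hst : ∀ n, Step d q m n) (n i : ℕ) :
    (q (n + i)).A.card = (q n).A.card + i := by
  induction i with
  | zero => rfl
  | succ i ih => rw [← Nat.add_assoc, (hst (n + i)).2.2.1, ih]; omega

lemma card_mono (hst : ∀ n, Step d q m n) {n n' : ℕ} (h : n ≤ n') :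
    (q n).A.card ≤ (q n').A.card := by
  obtain ⟨i, rfl⟩ := Nat.exists_eq_add_of_le h
  rw [card_add hst]; omega

lemma le_card (hst : ∀ n, Step d q m n) (n : ℕ) : n ≤ (q n).A.card := by
  have := card_add hst 0 n
  simp at this
  omega

lemma A_mono (hst : ∀ n, Step d q m n) {n n' : ℕ} (h : n ≤ n') :
    (q n).A ⊆ (q n').A := by
  obtain ⟨i, rfl⟩ := Nat.exists_eq_add_of_le h
  induction i with
  | zero => exact Finset.Subset.refl _
  | succ i ih =>
      rw [← Nat.add_assoc, (hst (n + i)).1]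
      exact subset_trans (ih (Nat.le_add_right n i)) (Finset.subset_insert _ _)

lemma m_mem (hst : ∀ n, Step d q m n) {i n : ℕ} (h : i < n) : m i ∈ (q n).A := by
  have h1 : m i ∈ (q (i + 1)).A := by rw [(hst i).1]; exact Finset.mem_insert_self _ _
  exact A_mono hst h h1

lemma Cfs_stage_mono (hst : ∀ n, Step d q m n) {n n' : ℕ} (h : n ≤ n') :
    Cfs (q n).A (q n).A.card ⊆ Cfs (q n').A (q n').A.card :=
  Cfs_mono (A_mono hst h) (card_mono hst h)

lemma psi_global (hst : ∀ n, Step d q m n) {n n' : ℕ} (h : n ≤ n')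
    {c : ℕ →₀ ℤ} (hc : c ∈ Cfs (q n).A (q n).A.card) :
    napprox d (q n').phi (toVec c) = napprox d (q n).phi (toVec c) := by
  obtain ⟨i, rfl⟩ := Nat.exists_eq_add_of_le h
  induction i with
  | zero => rfl
  | succ i ih =>
      rw [← Nat.add_assoc]
      rw [(hst (n + i)).2.2.2.1 c (Cfs_stage_mono hst (Nat.le_add_right n i) hc),
        ih (Nat.le_add_right n i)]

lemma W_global (hst : ∀ n, Step d q m n) {n n' j : ℕ} (h : n ≤ n') (hj : j ≤ (q n).A.card) :
    Went (q n').omega j = Went (q n).omega j := by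
  obtain ⟨i, rfl⟩ := Nat.exists_eq_add_of_le h
  induction i with
  | zero => rfl
  | succ i ih =>
      rw [← Nat.add_assoc]
      rw [(hst (n + i)).2.2.2.2.2.1 j (by have := card_add hst n i; omega),
        ih (Nat.le_add_right n i)]

lemma J_global (hst : ∀ n, Step d q m n) {n n' j : ℕ} (h : n ≤ n') (hj : j ≤ (q n).A.card) :
    Jent (q n').kappa j = Jent (q n).kappa j := by
  obtain ⟨i, rfl⟩ := Nat.exists_eq_add_of_le h
  induction i with
  | zero => rfl
  | succ i ih =>
      rw [← Nat.add_assoc]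
      rw [(hst (n + i)).2.2.2.2.2.2 j (by have := card_add hst n i; omega),
        ih (Nat.le_add_right n i)]

/-- The truncated lower-modulus table. -/
def KK (q : ℕ → QuadF c0 E) (n j : ℕ) : ℕ :=
  if 1 ≤ j ∧ j ≤ (q n).A.card then Kent (q n).kappa ((q n).A.card) j else 0

lemma Kent_kmono (κ : ℝ → ℝ≥0∞) {k k' : ℕ} (h : k ≤ k') (j : ℕ) :
    Kent κ k j ≤ Kent κ k' j := by
  refine Nat.floor_le_floor (ENNReal.toReal_mono ?_ ?_)
  · exact ne_top_of_le_ne_top (ENNReal.natCast_ne_top k') (min_le_right _ _)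
  · exact min_le_min le_rfl (by exact_mod_cast h)

lemma KK_mono_n (hst : ∀ n, Step d q m n) {n n' : ℕ} (h : n ≤ n') (j : ℕ) :
    KK q n j ≤ KK q n' j := by
  obtain ⟨i, rfl⟩ := Nat.exists_eq_add_of_le h
  induction i with
  | zero => exact le_refl _
  | succ i ih =>
      refine le_trans (ih (Nat.le_add_right n i)) ?_
      rw [← Nat.add_assoc]
      set n2 := n + i
      rw [KK, KK]
      by_cases hj : 1 ≤ j ∧ j ≤ (q n2).A.card
      · rw [if_pos hj, if_pos ⟨hj.1, by have := (hst n2).2.2.1; omega⟩]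
        rw [(hst n2).2.2.1, (hst n2).2.2.2.2.1 j (by omega)]
        exact Kent_kmono _ (Nat.le_succ _) j
      · rw [if_neg hj]
        exact Nat.zero_le _
end Chain
end S15

namespace S15
section Chain2
variable {E : Type*} [MetricSpace E]

lemma omega_mono {ω : ℝ → ℝ≥0∞} (hω : Nmod ω) {j j' : ℕ} (h1 : 1 ≤ j) (hj : j ≤ j') :
    ω j ≤ ω j' :=
  hω (natCast_mem_Zset h1) (natCast_mem_Zset (le_trans h1 hj)) (by exact_mod_cast hj)

lemma kappa_mono {κ : ℝ → ℝ≥0∞} (hκ : Nmod κ) {j j' : ℕ} (h1 : 1 ≤ j) (hj : j ≤ j') :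
    κ j ≤ κ j' :=
  hκ (natCast_mem_Zset h1) (natCast_mem_Zset (le_trans h1 hj)) (by exact_mod_cast hj)

lemma Jent_spec {κ : ℝ → ℝ≥0∞} (hκ : Tendsto (fun n : ℕ => κ n) atTop (nhds ⊤)) (M : ℕ) :
    ∀ r : ℕ, Jent κ M ≤ r → (M : ℝ≥0∞) ≤ κ r := by
  classical
  have hex : ∃ j : ℕ, ∀ r : ℕ, j ≤ r → (M : ℝ≥0∞) ≤ κ r := by
    have h1 : ∀ᶠ n : ℕ in atTop, (M : ℝ≥0∞) ≤ κ n :=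
      hκ.eventually (eventually_ge_nhds (lt_top_iff_ne_top.2 (ENNReal.natCast_ne_top M)))
    exact eventually_atTop.1 h1
  intro r hr
  rw [Jent, dif_pos hex] at hr
  exact Nat.find_spec hex r hr

variable {d : ℕ → E} {q : ℕ → QuadF c0 E} {m : ℕ → ℕ}

lemma theta_est {u : QuadF c0 E} (hu : u ∈ CoaTheta ZR stdBasis) {c c' : ℕ →₀ ℤ}
    (hc : ∀ i, i ∉ u.A → c i = 0) (hc' : ∀ i, i ∉ u.A → c' i = 0) (hne : c ≠ c') :
    u.kappa (tminus (dist (toVec c) (toVec c'))) ≤ edist (u.phi (toVec c)) (u.phi (toVec c')) ∧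
    edist (u.phi (toVec c)) (u.phi (toVec c')) ≤ u.omega (tplus (dist (toVec c) (toVec c'))) :=
  hu.1.2.2 (toVec c) (toVec_mem hc) (toVec c') (toVec_mem hc') (fun h => hne (toVec_inj h))

lemma est_upper {u : QuadF c0 E} (hu : u ∈ CoaTheta ZR stdBasis) {c c' : ℕ →₀ ℤ}
    (hc : ∀ i, i ∉ u.A → c i = 0) (hc' : ∀ i, i ∉ u.A → c' i = 0) (hne : c ≠ c') :
    dist (u.phi (toVec c)) (u.phi (toVec c')) ≤
      (Went u.omega ⌈dist (toVec c) (toVec c')⌉₊ : ℝ) := by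
  set D := dist (toVec c) (toVec c') with hD
  have hD1 : 1 ≤ D := one_le_dist_toVec hne
  have h2 := (theta_est hu hc hc' hne).2
  rw [tplus_eq hD1] at h2
  have hfin : u.omega (⌈D⌉₊ : ℝ) ≠ ⊤ :=
    (hu.2.1 _ (natCast_mem_Zset (one_le_natCeil hD1))).ne
  have h3 : dist (u.phi (toVec c)) (u.phi (toVec c')) ≤ (u.omega (⌈D⌉₊ : ℝ)).toReal := by
    rw [dist_edist]
    exact ENNReal.toReal_mono hfin h2
  exact le_trans h3 (Nat.le_ceil _)

lemma est_lower {u : QuadF c0 E} (hu : u ∈ CoaTheta ZR stdBasis) {c c' : ℕ →₀ ℤ}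
    (hc : ∀ i, i ∉ u.A → c i = 0) (hc' : ∀ i, i ∉ u.A → c' i = 0) (hne : c ≠ c')
    {j : ℕ} (k : ℕ) (hj1 : 1 ≤ j) (hjD : (j : ℝ) ≤ dist (toVec c) (toVec c')) :
    (Kent u.kappa k j : ℝ) ≤ dist (u.phi (toVec c)) (u.phi (toVec c')) := by
  set D := dist (toVec c) (toVec c') with hD
  have hD1 : 1 ≤ D := one_le_dist_toVec hne
  have h2 := (theta_est hu hc hc' hne).1
  rw [tminus_eq hD1] at h2
  have hκj : u.kappa (j : ℝ) ≤ u.kappa ((⌊D⌋₊ : ℕ) : ℝ) :=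
    kappa_mono hu.1.1 hj1 (Nat.le_floor hjD)
  have h4 : min (u.kappa (j : ℝ)) (k : ℝ≥0∞) ≤ ENNReal.ofReal (dist (u.phi (toVec c)) (u.phi (toVec c'))) := by
    rw [← edist_dist]
    exact le_trans (min_le_left _ _) (le_trans hκj h2)
  have h5 : (min (u.kappa (j : ℝ)) (k : ℝ≥0∞)).toReal ≤ dist (u.phi (toVec c)) (u.phi (toVec c')) :=
    ENNReal.toReal_le_of_le_ofReal dist_nonneg h4
  exact le_trans (Nat.floor_le (ENNReal.toReal_nonneg)) h5

/-- Canonical upper modulus table. -/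
def Wt (q : ℕ → QuadF c0 E) (j : ℕ) : ℕ := Went (q j).omega j

lemma Wt_mono (hq : ∀ n, q n ∈ CoaTheta ZR stdBasis) (hst : ∀ n, Step d q m n)
    {j j' : ℕ} (h1 : 1 ≤ j) (hj : j ≤ j') : Wt q j ≤ Wt q j' := by
  obtain ⟨i, rfl⟩ := Nat.exists_eq_add_of_le hj
  induction i with
  | zero => exact le_refl _
  | succ i ih =>
      refine le_trans (ih (Nat.le_add_right j i)) ?_
      rw [← Nat.add_assoc]
      set n2 := j + i with hn2
      show Went (q n2).omega n2 ≤ Went (q (n2 + 1)).omega (n2 + 1)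
      rw [← W_global hst (Nat.le_succ n2) (le_card hst n2)]
      have h1n2 : 1 ≤ n2 := le_trans h1 (Nat.le_add_right j i)
      refine Nat.ceil_le_ceil (ENNReal.toReal_mono ?_ ?_)
      · exact ((hq (n2 + 1)).2.1 _ (natCast_mem_Zset (by omega))).ne
      · exact omega_mono (hq (n2 + 1)).1.2.1 h1n2 (Nat.le_succ n2)

lemma KK_div (hq : ∀ n, q n ∈ CoaTheta ZR stdBasis) (hst : ∀ n, Step d q m n) (M : ℕ) :
    ∃ j₀ : ℕ, 1 ≤ j₀ ∧ ∀ j, j₀ ≤ j → M ≤ KK q j j := by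
  refine ⟨max (max (Jent (q M).kappa M) M) 1, le_max_right _ _, fun j hj => ?_⟩
  have hMj : M ≤ j := le_trans (le_max_of_le_left (le_max_right _ _)) hj
  have hjk : j ≤ (q j).A.card := le_card hst j
  have h1j : 1 ≤ j := le_trans (le_max_right _ _) hj
  have hJeq : Jent (q j).kappa M = Jent (q M).kappa M :=
    J_global hst hMj (le_card hst M)
  have hκ : (M : ℝ≥0∞) ≤ (q j).kappa j := by
    refine Jent_spec (hq j).2.2 M j ?_
    rw [hJeq]
    exact le_trans (le_max_of_le_left (le_max_left _ _)) hj
  rw [KK, if_pos ⟨h1j, hjk⟩, Kent]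
  refine Nat.le_floor ?_
  have hmin : (M : ℝ≥0∞) ≤ min ((q j).kappa j) ((q j).A.card : ℝ≥0∞) :=
    le_min hκ (by exact_mod_cast le_trans hMj hjk)
  have hfin : min ((q j).kappa j) ((q j).A.card : ℝ≥0∞) ≠ ⊤ :=
    ne_top_of_le_ne_top (ENNReal.natCast_ne_top _) (min_le_right _ _)
  have := ENNReal.toReal_mono hfin hmin
  simpa using this

end Chain2
end S15

namespace S15
section Chain3
variable {E : Type*} [MetricSpace E]

/-- Image point of a coefficient vector at stage `N`. -/
def Phi (d : ℕ → E) (q : ℕ → QuadF c0 E) (N : ℕ) (c : ℕ →₀ ℤ) : E :=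
  d (napprox d (q N).phi (toVec c))

variable {d : ℕ → E} {q : ℕ → QuadF c0 E} {m : ℕ → ℕ}

lemma Phi_approx (hd : DenseRange d) (hst : ∀ n, Step d q m n) {N n : ℕ} (hn : N ≤ n)
    {c : ℕ →₀ ℤ} (hc : c ∈ Cfs (q N).A (q N).A.card) :
    dist ((q n).phi (toVec c)) (Phi d q N c) < 1 := by
  rw [Phi, ← psi_global hst hn hc]
  exact napprox_spec hd _ _

lemma Phi_indep (hst : ∀ n, Step d q m n) {N N' : ℕ} {c : ℕ →₀ ℤ}
    (hc : c ∈ Cfs (q N).A (q N).A.card) (hc' : c ∈ Cfs (q N').A (q N').A.card) :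
    Phi d q N c = Phi d q N' c := by
  rw [Phi, Phi, ← psi_global hst (le_max_left N N') hc,
    ← psi_global hst (le_max_right N N') hc']

lemma pair_lower (hd : DenseRange d) (hq : ∀ n, q n ∈ CoaTheta ZR stdBasis)
    (hst : ∀ n, Step d q m n) {N : ℕ} {c c' : ℕ →₀ ℤ}
    (hc : c ∈ Cfs (q N).A (q N).A.card) (hc' : c' ∈ Cfs (q N).A (q N).A.card)
    (hne : c ≠ c') (n : ℕ) {j : ℕ} (hj1 : 1 ≤ j)
    (hjD : (j : ℝ) ≤ dist (toVec c) (toVec c')) :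
    (KK q n j : ℝ) ≤ dist (Phi d q N c) (Phi d q N c') + 2 := by
  set n2 := max (max n N) j with hn2
  have hmono : KK q n j ≤ KK q n2 j :=
    KK_mono_n hst (le_trans (le_max_left n N) (le_max_left _ _)) j
  have hNn2 : N ≤ n2 := le_trans (le_max_right n N) (le_max_left _ _)
  have hcn2 : c ∈ Cfs (q n2).A (q n2).A.card := Cfs_stage_mono hst hNn2 hc
  have hcn2' : c' ∈ Cfs (q n2).A (q n2).A.card := Cfs_stage_mono hst hNn2 hc'
  have hjk : j ≤ (q n2).A.card := le_trans (le_max_right _ _) (le_card hst n2)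
  have hKK : KK q n2 j = Kent (q n2).kappa ((q n2).A.card) j := by
    rw [KK, if_pos ⟨hj1, hjk⟩]
  have hest : (Kent (q n2).kappa ((q n2).A.card) j : ℝ) ≤
      dist ((q n2).phi (toVec c)) ((q n2).phi (toVec c')) :=
    est_lower (hq n2) (mem_Cfs.1 hcn2).1 (mem_Cfs.1 hcn2').1 hne _ hj1 hjD
  have ha1 : dist ((q n2).phi (toVec c)) (Phi d q N c) < 1 := Phi_approx hd hst hNn2 hc
  have ha2 : dist ((q n2).phi (toVec c')) (Phi d q N c') < 1 := Phi_approx hd hst hNn2 hc'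
  have htri : dist ((q n2).phi (toVec c)) ((q n2).phi (toVec c')) ≤
      dist ((q n2).phi (toVec c)) (Phi d q N c) + dist (Phi d q N c) (Phi d q N c') +
        dist (Phi d q N c') ((q n2).phi (toVec c')) :=
    dist_triangle4 _ _ _ _
  rw [dist_comm (Phi d q N c') _] at htri
  have : (KK q n2 j : ℝ) ≤ dist ((q n2).phi (toVec c)) ((q n2).phi (toVec c')) := by
    rw [hKK]; exact hest
  have hm2 : (KK q n j : ℝ) ≤ (KK q n2 j : ℝ) := by exact_mod_cast hmono
  linarith

lemma pair_upper (hd : DenseRange d) (hq : ∀ n, q n ∈ CoaTheta ZR stdBasis)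
    (hst : ∀ n, Step d q m n) {N : ℕ} {c c' : ℕ →₀ ℤ}
    (hc : c ∈ Cfs (q N).A (q N).A.card) (hc' : c' ∈ Cfs (q N).A (q N).A.card)
    (hne : c ≠ c') :
    dist (Phi d q N c) (Phi d q N c') ≤ (Wt q ⌈dist (toVec c) (toVec c')⌉₊ : ℝ) + 2 := by
  set D := dist (toVec c) (toVec c') with hD
  have hD1 : 1 ≤ D := one_le_dist_toVec hne
  set n2 := max N ⌈D⌉₊ with hn2
  have hNn2 : N ≤ n2 := le_max_left _ _
  have hcn2 : c ∈ Cfs (q n2).A (q n2).A.card := Cfs_stage_mono hst hNn2 hc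
  have hcn2' : c' ∈ Cfs (q n2).A (q n2).A.card := Cfs_stage_mono hst hNn2 hc'
  have hest : dist ((q n2).phi (toVec c)) ((q n2).phi (toVec c')) ≤
      (Went (q n2).omega ⌈D⌉₊ : ℝ) :=
    est_upper (hq n2) (mem_Cfs.1 hcn2).1 (mem_Cfs.1 hcn2').1 hne
  have hWt : Went (q n2).omega ⌈D⌉₊ = Wt q ⌈D⌉₊ :=
    W_global hst (le_max_right _ _) (le_card hst _)
  have ha1 : dist ((q n2).phi (toVec c)) (Phi d q N c) < 1 := Phi_approx hd hst hNn2 hc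
  have ha2 : dist ((q n2).phi (toVec c')) (Phi d q N c') < 1 := Phi_approx hd hst hNn2 hc'
  have htri : dist (Phi d q N c) (Phi d q N c') ≤
      dist (Phi d q N c) ((q n2).phi (toVec c)) +
        dist ((q n2).phi (toVec c)) ((q n2).phi (toVec c')) +
        dist ((q n2).phi (toVec c')) (Phi d q N c') :=
    dist_triangle4 _ _ _ _
  rw [dist_comm (Phi d q N c) ((q n2).phi (toVec c))] at htri
  rw [← hWt]
  linarith

/-! ### Rounding a `c0` point to an integer vector on the fresh coordinates -/

lemma sh_finite (x : c0) : {i : ℕ | (1 : ℝ) / 2 ≤ |x i|}.Finite := by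
  have hz : Tendsto (⇑x) (Filter.cocompact ℕ) (nhds 0) := x.zero_at_infty'
  rw [Filter.cocompact_eq_cofinite] at hz
  have h2 := hz (Metric.ball_mem_nhds (0 : ℝ) (by norm_num : (0 : ℝ) < 1 / 2))
  rw [Filter.mem_map, Filter.mem_cofinite] at h2
  refine h2.subset ?_
  intro i hi hb
  simp only [Set.mem_preimage, Metric.mem_ball, dist_zero_right, Real.norm_eq_abs] at hb
  exact absurd hb (not_lt.2 hi)

def sh (x : c0) : Finset ℕ := (sh_finite x).toFinset

lemma mem_sh {x : c0} {i : ℕ} : i ∈ sh x ↔ (1 : ℝ) / 2 ≤ |x i| := by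
  rw [sh, Set.Finite.mem_toFinset]; rfl

lemma round_eq_zero_of_not_sh {x : c0} {i : ℕ} (h : i ∉ sh x) : round (x i) = 0 := by
  rw [mem_sh] at h
  push_neg at h
  rw [round_eq, Int.floor_eq_zero_iff]
  constructor
  · rw [abs_lt] at h; linarith [h.1]
  · rw [abs_lt] at h; linarith [h.2]

def Rnd (m : ℕ → ℕ) (x : c0) : ℕ →₀ ℤ :=
  ∑ i ∈ sh x, Finsupp.single (m i) (round (x i))

lemma Rnd_eq_on (m : ℕ → ℕ) (x : c0) {S : Finset ℕ} (hS : sh x ⊆ S) :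
    Rnd m x = ∑ i ∈ S, Finsupp.single (m i) (round (x i)) := by
  refine Finset.sum_subset hS ?_
  intro i _ hi
  rw [round_eq_zero_of_not_sh hi, Finsupp.single_zero]

lemma Rnd_apply_m (hm : Function.Injective m) (x : c0) (i : ℕ) :
    Rnd m x (m i) = round (x i) := by
  classical
  by_cases hi : i ∈ sh x
  · rw [Rnd, Finsupp.finset_sum_apply]
    rw [Finset.sum_eq_single_of_mem i hi]
    · exact Finsupp.single_eq_same
    · intro i' _ hne
      exact Finsupp.single_eq_of_ne' (fun h => hne (hm h))
  · rw [Rnd, Finsupp.finset_sum_apply]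
    rw [round_eq_zero_of_not_sh hi]
    refine Finset.sum_eq_zero fun i' hi' => ?_
    exact Finsupp.single_eq_of_ne' (fun h => hi ((hm h) ▸ hi'))

lemma Rnd_apply_not (x : c0) {l : ℕ} (hl : ∀ i ∈ sh x, l ≠ m i) : Rnd m x l = 0 := by
  rw [Rnd, Finsupp.finset_sum_apply]
  exact Finset.sum_eq_zero fun i hi => Finsupp.single_eq_of_ne' (fun h => hl i hi h.symm)

end Chain3
end S15

namespace S15
section Chain4
variable {E : Type*} [MetricSpace E]
variable {d : ℕ → E} {q : ℕ → QuadF c0 E} {m : ℕ → ℕ}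

lemma m_strictMono (hst : ∀ n, Step d q m n) : StrictMono m :=
  strictMono_nat_of_lt_succ fun n => (hst (n + 1)).2.1 (m n) (m_mem hst (Nat.lt_succ_self n))

lemma Rnd_mem_stage (hst : ∀ n, Step d q m n) (x : c0) :
    ∃ n, Rnd m x ∈ Cfs (q n).A (q n).A.card := by
  classical
  set n := ((sh x).sup id + 1) + (sh x).sup (fun i => (round (x i)).natAbs) with hn
  refine ⟨n, mem_Cfs.2 ⟨?_, ?_⟩⟩
  · intro l hl
    by_contra h0
    have hex : ∃ i ∈ sh x, l = m i := by
      by_contra hno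
      push_neg at hno
      exact h0 (Rnd_apply_not x hno)
    obtain ⟨i, hi, rfl⟩ := hex
    refine hl (m_mem hst ?_)
    have : i ≤ (sh x).sup id := Finset.le_sup (f := id) hi
    omega
  · intro l
    by_cases hcase : ∃ i ∈ sh x, l = m i
    · obtain ⟨i, hi, rfl⟩ := hcase
      rw [Rnd_apply_m (m_strictMono hst).injective x i]
      have h1 : (round (x i)).natAbs ≤ (sh x).sup (fun i => (round (x i)).natAbs) :=
        Finset.le_sup (f := fun i => (round (x i)).natAbs) hi
      have h2 : n ≤ (q n).A.card := le_card hst n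
      rw [Int.abs_eq_natAbs]
      exact_mod_cast (by omega : (round (x i)).natAbs ≤ (q n).A.card)
    · push_neg at hcase
      rw [Rnd_apply_not x hcase]
      simp

open Classical in
def stg (d : ℕ → E) (q : ℕ → QuadF c0 E) (m : ℕ → ℕ) (x : c0) : ℕ :=
  if h : ∃ n, Rnd m x ∈ Cfs (q n).A (q n).A.card then Nat.find h else 0

lemma stg_spec (hst : ∀ n, Step d q m n) (x : c0) :
    Rnd m x ∈ Cfs (q (stg d q m x)).A (q (stg d q m x)).A.card := by
  classical
  have h := Rnd_mem_stage hst x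
  rw [stg, dif_pos h]
  exact Nat.find_spec h

/-- The final embedding map. -/
def fEmb (d : ℕ → E) (q : ℕ → QuadF c0 E) (m : ℕ → ℕ) (x : c0) : E :=
  Phi d q (stg d q m x) (Rnd m x)

lemma round_dist1 (a b : ℝ) :
    |((round a : ℤ) : ℝ) - ((round b : ℤ) : ℝ)| ≤ |a - b| + 1 := by
  have h : ((round a : ℤ) : ℝ) - ((round b : ℤ) : ℝ) =
      (((round a : ℤ) : ℝ) - a) + ((a - b) + (b - ((round b : ℤ) : ℝ))) := by ring
  rw [h]
  refine le_trans (abs_add_le _ _) ?_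
  refine le_trans (add_le_add le_rfl (abs_add_le _ _)) ?_
  have h1 := abs_sub_round a
  have h2 := abs_sub_round b
  rw [abs_sub_comm] at h1
  linarith

lemma round_dist2 (a b : ℝ) :
    |a - b| ≤ |((round a : ℤ) : ℝ) - ((round b : ℤ) : ℝ)| + 1 := by
  have h : a - b = (a - ((round a : ℤ) : ℝ)) +
      (( ((round a : ℤ) : ℝ) - ((round b : ℤ) : ℝ)) + (((round b : ℤ) : ℝ) - b)) := by ring
  rw [h]
  refine le_trans (abs_add_le _ _) ?_
  refine le_trans (add_le_add le_rfl (abs_add_le _ _)) ?_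
  have h1 := abs_sub_round a
  have h2 := abs_sub_round b
  rw [abs_sub_comm] at h2
  linarith

lemma coord_le_dist (x y : c0) (i : ℕ) : |x i - y i| ≤ dist x y := by
  rw [dist_eq_norm]
  have := c0_apply_le_norm (x - y) i
  rwa [ZeroAtInftyContinuousMap.coe_sub, Pi.sub_apply] at this

lemma sub_toVec_apply (c c' : ℕ →₀ ℤ) (l : ℕ) :
    (toVec c - toVec c') l = ((c l : ℤ) : ℝ) - ((c' l : ℤ) : ℝ) := by
  rw [ZeroAtInftyContinuousMap.coe_sub, Pi.sub_apply, toVec_apply, toVec_apply]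

lemma RD1 (hst : ∀ n, Step d q m n) (x y : c0) :
    dist (toVec (Rnd m x)) (toVec (Rnd m y)) ≤ dist x y + 1 := by
  rw [dist_eq_norm]
  refine c0_norm_le _ (add_nonneg dist_nonneg zero_le_one) fun l => ?_
  rw [sub_toVec_apply]
  by_cases hcase : ∃ i, l = m i
  · obtain ⟨i, rfl⟩ := hcase
    rw [Rnd_apply_m (m_strictMono hst).injective, Rnd_apply_m (m_strictMono hst).injective]
    exact le_trans (round_dist1 _ _) (by linarith [coord_le_dist x y i])
  · push_neg at hcase
    rw [Rnd_apply_not x (fun i _ => hcase i), Rnd_apply_not y (fun i _ => hcase i)]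
    simp only [Int.cast_zero, sub_zero, abs_zero]
    linarith [dist_nonneg (x := x) (y := y)]

lemma RD2 (hst : ∀ n, Step d q m n) (x y : c0) :
    dist x y ≤ dist (toVec (Rnd m x)) (toVec (Rnd m y)) + 1 := by
  rw [dist_eq_norm x y]
  refine c0_norm_le _ (add_nonneg dist_nonneg zero_le_one) fun i => ?_
  have h0 : (⇑(x - y) : ℕ → ℝ) i = x i - y i := by
    rw [ZeroAtInftyContinuousMap.coe_sub, Pi.sub_apply]
  rw [h0]
  refine le_trans (round_dist2 (x i) (y i)) ?_
  have h1 : ((round (x i) : ℤ) : ℝ) - ((round (y i) : ℤ) : ℝ) =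
      (toVec (Rnd m x) - toVec (Rnd m y)) (m i) := by
    rw [sub_toVec_apply, Rnd_apply_m (m_strictMono hst).injective,
      Rnd_apply_m (m_strictMono hst).injective]
  rw [h1]
  have h2 := c0_apply_le_norm (toVec (Rnd m x) - toVec (Rnd m y)) (m i)
  rw [dist_eq_norm]
  linarith

lemma dist_le_one_of_Rnd_eq (hst : ∀ n, Step d q m n) {x y : c0} (h : Rnd m x = Rnd m y) :
    dist x y ≤ 1 := by
  have := RD2 hst x y
  rw [h] at this
  simpa using this

end Chain4
end S15

namespace S15
section Chain5
variable {E : Type*} [MetricSpace E]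

/-- Running max of the diagonal lower-modulus table. -/
def Hm (q : ℕ → QuadF c0 E) (N : ℕ) : ℕ := (Finset.range (N + 1)).sup (fun j => KK q j j)

variable {d : ℕ → E} {q : ℕ → QuadF c0 E} {m : ℕ → ℕ}

lemma Hm_mono (q : ℕ → QuadF c0 E) {N N' : ℕ} (h : N ≤ N') : Hm q N ≤ Hm q N' :=
  Finset.sup_mono (by intro j hj; rw [Finset.mem_range] at *; omega)

theorem embed_main (hd : DenseRange d) (hq : ∀ n, q n ∈ CoaTheta ZR stdBasis)
    (hst : ∀ n, Step d q m n) : ∃ f : c0 → E, CoarseEmbeddingMap f := by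
  classical
  refine ⟨fEmb d q m, ?_⟩
  have key_low : ∀ x y : c0, Rnd m x ≠ Rnd m y → ∀ n : ℕ, ∀ j : ℕ, 1 ≤ j →
      (j : ℝ) ≤ dist (toVec (Rnd m x)) (toVec (Rnd m y)) →
      (KK q n j : ℝ) ≤ dist (fEmb d q m x) (fEmb d q m y) + 2 := by
    intro x y hne n j hj1 hjD
    set N := max (stg d q m x) (stg d q m y) with hN
    have hcx : Rnd m x ∈ Cfs (q N).A (q N).A.card :=
      Cfs_stage_mono hst (le_max_left _ _) (stg_spec hst x)
    have hcy : Rnd m y ∈ Cfs (q N).A (q N).A.card :=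
      Cfs_stage_mono hst (le_max_right _ _) (stg_spec hst y)
    have e1 : fEmb d q m x = Phi d q N (Rnd m x) := Phi_indep hst (stg_spec hst x) hcx
    have e2 : fEmb d q m y = Phi d q N (Rnd m y) := Phi_indep hst (stg_spec hst y) hcy
    rw [e1, e2]
    exact pair_lower hd hq hst hcx hcy hne n hj1 hjD
  have key_up : ∀ x y : c0, Rnd m x ≠ Rnd m y →
      dist (fEmb d q m x) (fEmb d q m y) ≤
        (Wt q ⌈dist (toVec (Rnd m x)) (toVec (Rnd m y))⌉₊ : ℝ) + 2 := by
    intro x y hne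
    set N := max (stg d q m x) (stg d q m y) with hN
    have hcx : Rnd m x ∈ Cfs (q N).A (q N).A.card :=
      Cfs_stage_mono hst (le_max_left _ _) (stg_spec hst x)
    have hcy : Rnd m y ∈ Cfs (q N).A (q N).A.card :=
      Cfs_stage_mono hst (le_max_right _ _) (stg_spec hst y)
    have e1 : fEmb d q m x = Phi d q N (Rnd m x) := Phi_indep hst (stg_spec hst x) hcx
    have e2 : fEmb d q m y = Phi d q N (Rnd m y) := Phi_indep hst (stg_spec hst y) hcy
    rw [e1, e2]
    exact pair_upper hd hq hst hcx hcy hne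
  refine ⟨fun t => if t < 4 then 0 else max ((Hm q (⌊t⌋₊ - 2) : ℝ) - 2) 0,
    fun t => (Wt q (⌈t⌉₊ + 1) : ℝ) + 2, ?_, ?_, ?_, ?_, ?_⟩
  · -- MonotoneOn κf
    intro a _ b _ hab
    dsimp only
    by_cases hb4 : b < 4
    · rw [if_pos (lt_of_le_of_lt hab hb4), if_pos hb4]
    · by_cases ha4 : a < 4
      · rw [if_pos ha4, if_neg hb4]
        exact le_max_right _ _
      · rw [if_neg ha4, if_neg hb4]
        refine max_le_max (sub_le_sub_right ?_ 2) le_rfl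
        exact_mod_cast Hm_mono q (Nat.sub_le_sub_right (Nat.floor_mono hab) 2)
  · -- MonotoneOn ωf
    intro a ha b _ hab
    dsimp only
    have h1 : (1 : ℕ) ≤ ⌈a⌉₊ + 1 := by omega
    have h2 : ⌈a⌉₊ + 1 ≤ ⌈b⌉₊ + 1 := by
      have := Nat.ceil_mono hab; omega
    have := Wt_mono (d := d) (m := m) hq hst h1 h2
    have hc : (Wt q (⌈a⌉₊ + 1) : ℝ) ≤ (Wt q (⌈b⌉₊ + 1) : ℝ) := by exact_mod_cast this
    linarith
  · -- nonneg
    intro t _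
    dsimp only
    constructor
    · by_cases h4 : t < 4
      · rw [if_pos h4]
      · rw [if_neg h4]; exact le_max_right _ _
    · positivity
  · -- tendsto atTop
    rw [tendsto_atTop]
    intro b
    set Mn : ℕ := ⌈max b 0⌉₊ + 2 with hMn
    have hbM : b ≤ (Mn : ℝ) - 2 := by
      have h1 : b ≤ max b 0 := le_max_left _ _
      have h2 : max b 0 ≤ (⌈max b 0⌉₊ : ℝ) := Nat.le_ceil _
      have : ((⌈max b 0⌉₊ : ℕ) : ℝ) = (Mn : ℝ) - 2 := by rw [hMn]; push_cast; ring
      linarith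
    obtain ⟨j₀, hj₀1, hj₀⟩ := KK_div (d := d) (m := m) hq hst Mn
    filter_upwards [eventually_ge_atTop ((j₀ : ℝ) + 7)] with t ht
    have ht4 : ¬(t < 4) := by
      push_neg
      have : (0:ℝ) ≤ j₀ := Nat.cast_nonneg _
      linarith
    rw [if_neg ht4]
    have hfl : j₀ + 7 ≤ ⌊t⌋₊ := Nat.le_floor (by push_cast; linarith)
    have hM : j₀ ≤ ⌊t⌋₊ - 2 := by omega
    have hKK : Mn ≤ KK q (⌊t⌋₊ - 2) (⌊t⌋₊ - 2) := hj₀ _ hM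
    have hHm : Mn ≤ Hm q (⌊t⌋₊ - 2) := by
      refine le_trans hKK ?_
      rw [Hm]
      exact Finset.le_sup (f := fun j => KK q j j) (Finset.mem_range.2 (by omega))
    have hHm' : (Mn : ℝ) ≤ (Hm q (⌊t⌋₊ - 2) : ℝ) := by exact_mod_cast hHm
    refine le_trans ?_ (le_max_left _ _)
    linarith
  · -- the two estimates
    intro x y
    constructor
    · -- lower
      dsimp only
      by_cases h4 : dist x y < 4
      · rw [if_pos h4]
        exact dist_nonneg
      · rw [if_neg h4]
        push_neg at h4
        have hne : Rnd m x ≠ Rnd m y := by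
          intro h
          have := dist_le_one_of_Rnd_eq hst h
          linarith
        set D := dist (toVec (Rnd m x)) (toVec (Rnd m y)) with hD
        have hD2 : dist x y ≤ D + 1 := RD2 hst x y
        have hfl4 : 4 ≤ ⌊dist x y⌋₊ := Nat.le_floor (by push_cast; linarith)
        obtain ⟨js, hjs, hjeq⟩ := Finset.exists_mem_eq_sup
          (Finset.range ((⌊dist x y⌋₊ - 2) + 1)) ⟨0, Finset.mem_range.2 (by omega)⟩
          (fun j => KK q j j)
        rw [Finset.mem_range] at hjs
        have hHm : (Hm q (⌊dist x y⌋₊ - 2) : ℝ) ≤ dist (fEmb d q m x) (fEmb d q m y) + 2 := by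
          rw [Hm, hjeq]
          by_cases hjs1 : 1 ≤ js
          · refine key_low x y hne js js hjs1 ?_
            have hc1 : (js : ℝ) ≤ (⌊dist x y⌋₊ : ℝ) - 2 := by
              have : js ≤ ⌊dist x y⌋₊ - 2 := by omega
              have h2 : ((⌊dist x y⌋₊ - 2 : ℕ) : ℝ) = (⌊dist x y⌋₊ : ℝ) - 2 := by
                push_cast [Nat.cast_sub (by omega : 2 ≤ ⌊dist x y⌋₊)]; ring
              calc (js:ℝ) ≤ ((⌊dist x y⌋₊ - 2 : ℕ) : ℝ) := by exact_mod_cast this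
                _ = (⌊dist x y⌋₊ : ℝ) - 2 := h2
            have hfle : (⌊dist x y⌋₊ : ℝ) ≤ dist x y := Nat.floor_le dist_nonneg
            linarith
          · have : js = 0 := by omega
            subst this
            have : KK q 0 0 = 0 := by rw [KK, if_neg (by omega)]
            rw [this]
            have := dist_nonneg (x := fEmb d q m x) (y := fEmb d q m y)
            push_cast
            linarith
        refine max_le (by linarith) dist_nonneg
    · -- upper
      dsimp only
      by_cases hne : Rnd m x = Rnd m y
      · have hfeq : fEmb d q m x = fEmb d q m y := by
          rw [fEmb, fEmb, stg, stg, hne]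
        rw [hfeq, dist_self]
        positivity
      · have h1 := key_up x y hne
        set D := dist (toVec (Rnd m x)) (toVec (Rnd m y)) with hD
        have hD1 : D ≤ dist x y + 1 := RD1 hst x y
        have hDge : 1 ≤ D := one_le_dist_toVec hne
        have hceil : ⌈D⌉₊ ≤ ⌈dist x y⌉₊ + 1 := by
          have h2 : ⌈D⌉₊ ≤ ⌈dist x y + 1⌉₊ := Nat.ceil_mono hD1
          rwa [Nat.ceil_add_one dist_nonneg] at h2
        have h3 := Wt_mono (d := d) (m := m) hq hst (one_le_natCeil hDge) hceil
        have h4 : (Wt q ⌈D⌉₊ : ℝ) ≤ (Wt q (⌈dist x y⌉₊ + 1) : ℝ) := by exact_mod_cast h3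
        linarith

end Chain5
end S15

namespace S15
section Glue
variable {E : Type*} [MetricSpace E]

lemma napprox_congr {d : ℕ → E} {φ ψ : c0 → E} {x : c0} (h : φ x = ψ x) :
    napprox d φ x = napprox d ψ x := by
  unfold napprox
  rw [h]

lemma list_pointwise {k : ℕ} {f g : ℕ → ℕ}
    (h : (List.range (k + 1)).map f = (List.range (k + 1)).map g) {j : ℕ} (hj : j ≤ k) :
    f j = g j :=
  (List.map_inj_left.1 h) j (List.mem_range.2 (by omega))

lemma psi_pointwise {d : ℕ → E} {u v : QuadF c0 E} (hA : u.A = v.A)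
    (h : codeOf d u = codeOf d v) {c : ℕ →₀ ℤ} (hc : c ∈ Cfs v.A v.A.card) :
    napprox d u.phi (toVec c) = napprox d v.phi (toVec c) := by
  have hpsi := congrArg Code.psi h
  simp only [codeOf] at hpsi
  rw [hA] at hpsi
  have hmem : (c, napprox d u.phi (toVec c)) ∈
      (Cfs v.A v.A.card).image (fun c => (c, napprox d v.phi (toVec c))) := by
    rw [← hpsi]
    exact Finset.mem_image_of_mem _ hc
  obtain ⟨c', _, heq⟩ := Finset.mem_image.1 hmem
  have h1 : c' = c := congrArg Prod.fst heq
  subst h1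
  exact (congrArg Prod.snd heq).symm

theorem chain_coarse (d : ℕ → E) (hd : DenseRange d) (b : ℕ → Code)
    (hb : ∀ n, CodeRel (E := E) d (b (n + 1)) (b n)) :
    ∃ f : c0 → E, CoarseEmbeddingMap f := by
  classical
  choose pp qq hpp hqq hrel hcp hcq using hb
  choose m hm1 hm2 using fun n => (hrel n).2.2.1
  have hcode : ∀ n, codeOf d (pp n) = codeOf d (qq (n + 1)) := fun n => by
    rw [hcp n, ← hcq (n + 1)]
  have hA : ∀ n, (qq (n + 1)).A = (pp n).A := fun n => (congrArg Code.A (hcode n)).symm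
  have hmnot : ∀ n, m n ∉ (qq n).A := fun n hmem => lt_irrefl _ (hm1 n _ hmem)
  have hcard : ∀ n, (qq (n + 1)).A.card = (qq n).A.card + 1 := by
    intro n
    rw [hA n, hm2 n, Finset.card_insert_of_notMem (hmnot n)]
  have hcardp : ∀ n, (pp n).A.card = (qq n).A.card + 1 := by
    intro n
    rw [← hA n]
    exact hcard n
  have hst : ∀ n, Step d qq m n := by
    intro n
    have hAn : (qq (n + 1)).A = insert (m n) (qq n).A := by rw [hA n, hm2 n]
    refine ⟨hAn, hm1 n, hcard n, ?_, ?_, ?_, ?_⟩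
    · -- psi
      intro c hc
      have hsub : c ∈ Cfs (qq (n + 1)).A (qq (n + 1)).A.card := by
        refine Cfs_mono ?_ ?_ hc
        · rw [hAn]; exact Finset.subset_insert _ _
        · rw [hcard n]; omega
      have h1 : napprox d (pp n).phi (toVec c) = napprox d (qq (n + 1)).phi (toVec c) :=
        psi_pointwise (hA n).symm (hcode n) hsub
      have h2 : (pp n).phi (toVec c) = (qq n).phi (toVec c) :=
        (hrel n).2.2.2 (toVec c) (toVec_mem (mem_Cfs.1 hc).1)
      rw [← h1]
      exact napprox_congr h2
    · -- K
      intro j hj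
      have hKl := congrArg Code.Kl (hcode n)
      simp only [codeOf] at hKl
      rw [hcardp n, hcard n] at hKl
      have h3 := list_pointwise hKl hj
      rw [(hrel n).1] at h3
      exact h3.symm
    · -- W
      intro j hj
      have hWl := congrArg Code.Wl (hcode n)
      simp only [codeOf] at hWl
      rw [hcardp n, hcard n] at hWl
      have h3 := list_pointwise hWl hj
      rw [(hrel n).2.1] at h3
      exact h3.symm
    · -- J
      intro j hj
      have hJl := congrArg Code.Jl (hcode n)
      simp only [codeOf] at hJl
      rw [hcardp n, hcard n] at hJl
      have h3 := list_pointwise hJl hj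
      rw [(hrel n).1] at h3
      exact h3.symm
  exact embed_main hd hqq hst

end Glue
end S15

theorem stmt15 {E : Type*} [MetricSpace E]
    [TopologicalSpace.SeparableSpace E] [CompleteSpace E] :
    (∃ f : c0 → E, CoarseEmbeddingMap f) ∨
      ∃ hwf : WellFounded fun p q : ↥(CoaTheta (E := E) ZR stdBasis) =>
          QuadFRel ZR stdBasis p.1 q.1,
        relRankOn (QuadFRel ZR stdBasis) (CoaTheta (E := E) ZR stdBasis) hwf
          < (Cardinal.aleph 1).ord := by
  classical
  have hord0 : (⊥ : Ordinal) < (Cardinal.aleph 1).ord := by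
    rw [Cardinal.lt_ord]
    simpa using lt_trans Cardinal.aleph0_pos Cardinal.aleph0_lt_aleph_one
  by_cases hE : Nonempty E
  · by_cases hemb : ∃ f : c0 → E, CoarseEmbeddingMap f
    · exact Or.inl hemb
    right
    obtain ⟨d, hd⟩ := TopologicalSpace.exists_dense_seq E
    set sU : ULift S15.Code → ULift S15.Code → Prop :=
      fun b' b => S15.CodeRel (E := E) d b'.down b.down with hsU
    have hswf : WellFounded sU := by
      by_contra hnw
      obtain ⟨f, hf⟩ := S15.exists_descending_of_not_wf hnw
      exact hemb (S15.chain_coarse d hd (fun n => (f n).down) hf)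
    set G : ↥(CoaTheta (E := E) ZR stdBasis) → ULift S15.Code :=
      fun a => ULift.up (S15.codeOf d a.1) with hG
    have hmap : ∀ a a' : ↥(CoaTheta (E := E) ZR stdBasis),
        QuadFRel ZR stdBasis a.1 a'.1 → sU (G a) (G a') :=
      fun a a' h => ⟨a.1, a'.1, a.2, a'.2, h, rfl, rfl⟩
    have hwf : WellFounded (fun p q : ↥(CoaTheta (E := E) ZR stdBasis) =>
        QuadFRel ZR stdBasis p.1 q.1) :=
      Subrelation.wf (fun {p q} h => hmap p q h) (InvImage.wf G hswf)
    refine ⟨hwf, ?_⟩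
    rw [relRankOn]
    refine lt_of_le_of_lt (Ordinal.iSup_le fun a => ?_) (S15.rank_sup_lt_omega1 hswf)
    calc Order.succ ((hwf.apply a).rank)
        ≤ Order.succ ((hswf.apply (G a)).rank) :=
          Order.succ_le_succ (S15.acc_rank_le_of_map G hmap hswf (G a) a rfl _)
      _ ≤ ⨆ b, Order.succ (hswf.apply b).rank :=
          Ordinal.le_iSup (fun b => Order.succ (hswf.apply b).rank) (G a)
  · right
    have hemp : IsEmpty (QuadF c0 E) :=
      ⟨fun q => hE ⟨q.phi 0⟩⟩
    have hempS : IsEmpty ↥(CoaTheta (E := E) ZR stdBasis) := ⟨fun a => hemp.false a.1⟩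
    have hwf : WellFounded (fun p q : ↥(CoaTheta (E := E) ZR stdBasis) =>
        QuadFRel ZR stdBasis p.1 q.1) := ⟨fun a => (hempS.false a).elim⟩
    refine ⟨hwf, ?_⟩
    rw [relRankOn, ciSup_of_empty]
    exact hord0
end
end

section
/- Assume that every family F ⊆ ℕ^ℕ of cardinality at most ℵ₁ is bounded with respect to eventual domination (i.e., 𝔟 > ℵ₁). Let I be an uncountable set and let {g_i}_{i∈I} and {f_i}_{i∈I} be families of non-decreasing functions g_i, f_i : ℕ → ℕ satisfying lim_{n→∞} g_i(n) = lim_{n→∞} f_i(n) = ∞. Then there exist non-decreasing functions f, g : ℕ → ℕ with lim_{n→∞} g(n) = lim_{n→∞} f(n) = ∞ and an uncountable subset J ⊆ I such that g(n) ≤ g_i(n) and f_i(n) ≤ f(n) for all n ∈ ℕ and all i ∈ J. -/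
open Filter Set Topology
open scoped ENNReal

theorem stmt17 (hb : ∀ F : Set (ℕ → ℕ), Cardinal.mk F ≤ Cardinal.aleph 1 → EvDomBounded F)
    {I : Type*} (hI : ¬ (Set.univ : Set I).Countable)
    (g f : I → ℕ → ℕ) (hgmono : ∀ i, Monotone (g i)) (hfmono : ∀ i, Monotone (f i))
    (hg : ∀ i, Filter.Tendsto (g i) Filter.atTop Filter.atTop)
    (hf : ∀ i, Filter.Tendsto (f i) Filter.atTop Filter.atTop) :
    ∃ G F : ℕ → ℕ, Monotone G ∧ Monotone F ∧
      Filter.Tendsto G Filter.atTop Filter.atTop ∧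
      Filter.Tendsto F Filter.atTop Filter.atTop ∧
      ∃ J : Set I, ¬ J.Countable ∧ ∀ i ∈ J, ∀ n : ℕ, G n ≤ g i n ∧ f i n ≤ F n := by
  classical
  have hginv : ∀ i k, ∃ n, k ≤ g i n := fun i k => ((hg i).eventually_ge_atTop k).exists
  set ai : I → ℕ → ℕ := fun i k => Nat.find (hginv i k) with hai
  set p : I → ℕ → ℕ := fun i n => max (f i n) (ai i n) with hp
  -- a subset of size ℵ₁
  have hIcard : Cardinal.aleph 1 ≤ Cardinal.mk I := by
    have := (Cardinal.countable_iff_lt_aleph_one (Set.univ : Set I)).not.mp hI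
    rw [Cardinal.mk_univ] at this
    exact le_of_not_gt this
  obtain ⟨S, hS⟩ := Cardinal.le_mk_iff_exists_set.mp hIcard
  have hSuncount : ¬ S.Countable := by
    rw [Cardinal.countable_iff_lt_aleph_one, hS]
    exact lt_irrefl _
  -- bound the family
  have hFam : Cardinal.mk ((fun i => p i) '' S : Set (ℕ → ℕ)) ≤ Cardinal.aleph 1 := by
    have h1 := Cardinal.mk_image_le_lift (f := fun i => p i) (s := S)
    rw [hS, Cardinal.lift_id'] at h1
    apply Cardinal.lift_le.mp
    rw [Cardinal.lift_aleph, Ordinal.lift_one]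
    exact h1
  obtain ⟨h, hh⟩ := hb _ hFam
  have hev : ∀ i ∈ S, ∃ m, ∀ n ≥ m, p i n < h n := by
    intro i hi
    simpa [Filter.eventually_atTop] using hh (p i) ⟨i, hi, rfl⟩
  set mi : I → ℕ := fun i => if hi : i ∈ S then (hev i hi).choose else 0 with hmi
  have hmi_spec : ∀ i (hi : i ∈ S), ∀ n ≥ mi i, p i n < h n := by
    intro i hi
    simp only [hmi, dif_pos hi]
    exact (hev i hi).choose_spec
  set code : I → ℕ × List ℕ := fun i => (mi i, (List.range (mi i)).map (p i)) with hcode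
  have hfib : ∃ c, ¬ (S ∩ code ⁻¹' {c}).Countable := by
    by_contra hcon
    push_neg at hcon
    apply hSuncount
    have hsub : S ⊆ ⋃ c : ℕ × List ℕ, (S ∩ code ⁻¹' {c}) := by
      intro i hi
      exact Set.mem_iUnion.mpr ⟨code i, hi, rfl⟩
    exact (Set.countable_iUnion hcon).mono hsub
  obtain ⟨c, hJunc⟩ := hfib
  set J := S ∩ code ⁻¹' {c} with hJdef
  have hJne : J.Nonempty := by
    rw [Set.nonempty_iff_ne_empty]
    intro h0
    exact hJunc (h0 ▸ Set.countable_empty)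
  obtain ⟨i₀, hi₀⟩ := hJne
  set m := mi i₀ with hmdef
  have hsame : ∀ i ∈ J, mi i = m ∧ ∀ n < m, p i n = p i₀ n := by
    intro i hi
    have hc : code i = code i₀ := by
      have h1 : code i = c := hi.2
      have h2 : code i₀ = c := hi₀.2
      rw [h1, h2]
    have hm : mi i = m := congrArg Prod.fst hc
    refine ⟨hm, fun n hn => ?_⟩
    have hl : (List.range m).map (p i) = (List.range m).map (p i₀) := by
      have := congrArg Prod.snd hc
      simp only [hcode, hm] at this
      exact this
    have := congrArg (fun l => l[n]?) hl
    simpa [List.getElem?_map, List.getElem?_range, hn] using this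
  set b : ℕ → ℕ := fun n => max (h n) (p i₀ n) with hbdef
  have hpb : ∀ i ∈ J, ∀ n, p i n ≤ b n := by
    intro i hi n
    rcases lt_or_ge n m with hn | hn
    · exact le_trans (le_of_eq ((hsame i hi).2 n hn)) (le_max_right _ _)
    · have hlt := hmi_spec i hi.1 n (by rw [(hsame i hi).1]; exact hn)
      exact le_trans hlt.le (le_max_left _ _)
  set B : ℕ → ℕ := fun n => n + (Finset.range (n + 1)).sup b with hBdef
  have hbB : ∀ n, b n ≤ B n := fun n =>
    le_trans (Finset.le_sup (Finset.mem_range.mpr (Nat.lt_succ_self n))) (Nat.le_add_left _ _)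
  have hnB : ∀ n, n ≤ B n := fun n => Nat.le_add_right _ _
  have hBmono : Monotone B := by
    intro a a' haa
    exact Nat.add_le_add haa (Finset.sup_mono (Finset.range_subset_range.mpr (by omega)))
  set G : ℕ → ℕ := fun n => Nat.findGreatest (fun k => B k ≤ n) n with hGdef
  have hGspec : ∀ n, G n ≠ 0 → B (G n) ≤ n := by
    intro n h0
    exact (Nat.findGreatest_eq_iff.1 (rfl : Nat.findGreatest (fun k => B k ≤ n) n = G n)).2.1 h0
  have hGmono : Monotone G := by
    intro a a' haa
    rcases Nat.eq_zero_or_pos (G a) with h0 | hpos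
    · rw [h0]; exact Nat.zero_le _
    · have hBa : B (G a) ≤ a := hGspec a (Nat.pos_iff_ne_zero.mp hpos)
      exact Nat.le_findGreatest (le_trans (Nat.findGreatest_le a) haa) (le_trans hBa haa)
  have hGB : ∀ k, k ≤ G (B k) :=
    fun k => Nat.le_findGreatest (hnB k) le_rfl
  have hGtend : Filter.Tendsto G Filter.atTop Filter.atTop :=
    tendsto_atTop_atTop_of_monotone hGmono (fun k => ⟨B k, hGB k⟩)
  have hBtend : Filter.Tendsto B Filter.atTop Filter.atTop :=
    tendsto_atTop_mono hnB tendsto_id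
  refine ⟨G, B, hGmono, hBmono, hGtend, hBtend, J, hJunc, ?_⟩
  intro i hi n
  constructor
  · rcases Nat.eq_zero_or_pos (G n) with h0 | hpos
    · rw [h0]; exact Nat.zero_le _
    · have hBG : B (G n) ≤ n := hGspec n (Nat.pos_iff_ne_zero.mp hpos)
      have h1 : ai i (G n) ≤ n :=
        le_trans (le_trans (le_max_right _ _) (le_trans (hpb i hi (G n)) (hbB _))) hBG
      have h2 : G n ≤ g i (ai i (G n)) := Nat.find_spec (hginv i (G n))
      exact h2.trans (hgmono i h1)
  · exact le_trans (le_max_left _ _) (le_trans (hpb i hi n) (hbB n))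
end

section
/- Assume that every family F ⊆ ℕ^ℕ of cardinality at most ℵ₁ is bounded with respect to eventual domination (i.e., 𝔟 > ℵ₁). Let Y be a metric space and let {X_i}_{i∈I} be an uncountable family of metric spaces such that each X_i coarsely embeds into Y. Then there is an uncountable subset J ⊆ I such that the subfamily {X_i}_{i∈J} embeds equi-coarsely into Y. -/
open Filter Set Topology
open scoped ENNReal

private lemma aux_card_image {α : Type*} {β : Type} (F : α → β) (S : Set α)
    (hS : Cardinal.mk ↥S = Cardinal.aleph 1) :
    Cardinal.mk ↥(F '' S) ≤ Cardinal.aleph 1 := by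
  have h1 := Cardinal.mk_image_le_lift (f := F) (s := S)
  rw [hS] at h1
  simpa [Cardinal.lift_aleph, ← Cardinal.lift_le] using h1

private lemma sup_id_mem_of_nonempty (s : Finset ℕ) (h : s.Nonempty) : s.sup id ∈ s := by
  have := s.max'_mem h
  rwa [Finset.max'_eq_sup', Finset.sup'_eq_sup] at this

theorem stmt18 (hb : ∀ F : Set (ℕ → ℕ), Cardinal.mk F ≤ Cardinal.aleph 1 → EvDomBounded F)
    {Y : Type*} [MetricSpace Y] {I : Type*} (hI : ¬ (Set.univ : Set I).Countable)
    (X : I → Type*) [∀ i, MetricSpace (X i)]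
    (h : ∀ i, ∃ f : X i → Y, CoarseEmbeddingMap f) :
    ∃ J : Set I, ¬ J.Countable ∧
      ∃ κ ω : ℝ → ℝ, MonotoneOn κ (Set.Ici 0) ∧ MonotoneOn ω (Set.Ici 0) ∧
        (∀ t : ℝ, 0 ≤ t → 0 ≤ κ t ∧ 0 ≤ ω t) ∧
        Filter.Tendsto κ Filter.atTop Filter.atTop ∧
        ∀ i ∈ J, ∃ f : X i → Y, ∀ x y : X i,
          κ (dist x y) ≤ dist (f x) (f y) ∧ dist (f x) (f y) ≤ ω (dist x y) := by
  classical
  choose f hf using h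
  choose κ ω hκm hωm hnn htend hineq using hf
  have hA : ∀ i (m : ℕ), ∃ c : ℕ, (m : ℝ) ≤ κ i (c : ℝ) := by
    intro i m
    obtain ⟨t₀, ht₀⟩ := Filter.eventually_atTop.mp (Filter.tendsto_atTop.mp (htend i) (m : ℝ))
    exact ⟨⌈max t₀ 0⌉₊, ht₀ _ (le_trans (le_max_left _ _) (Nat.le_ceil _))⟩
  choose A hA using hA
  set F : I → ℕ → ℕ := fun i m => max ⌈ω i (m : ℝ)⌉₊ (A i m) with hFdef
  -- aleph 1 ≤ #I
  have hIc : ¬ Countable I := fun hc => hI (Set.countable_univ_iff.mpr hc)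
  have haleph1 : Cardinal.aleph 1 = Order.succ Cardinal.aleph0 := by
    rw [show (1 : Ordinal) = Order.succ 0 by simp, Cardinal.aleph_succ, Cardinal.aleph_zero]
  have hℵ : Cardinal.aleph 1 ≤ Cardinal.mk I := by
    rw [haleph1]
    exact Order.succ_le_of_lt (lt_of_not_ge fun hle => hIc (Cardinal.mk_le_aleph0_iff.mp hle))
  obtain ⟨S, hS⟩ := Cardinal.le_mk_iff_exists_set.mp hℵ
  have hSnc : ¬ S.Countable := by
    intro hc
    have : Cardinal.mk ↥S ≤ Cardinal.aleph0 := @Cardinal.mk_le_aleph0 _ hc.to_subtype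
    rw [hS] at this
    exact absurd this (not_le.mpr Cardinal.aleph0_lt_aleph_one)
  -- apply hb to F '' S
  have hcard : Cardinal.mk ↥(F '' S) ≤ Cardinal.aleph 1 := aux_card_image F S hS
  obtain ⟨g, hg⟩ := hb (F '' S) hcard
  -- thresholds
  have hNex : ∀ i : I, ∃ n : ℕ, i ∈ S → ∀ m ≥ n, F i m < g m := by
    intro i
    by_cases hi : i ∈ S
    · obtain ⟨n, hn⟩ := Filter.eventually_atTop.mp (hg (F i) ⟨i, hi, rfl⟩)
      exact ⟨n, fun _ => hn⟩
    · exact ⟨0, fun hc => absurd hc hi⟩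
  choose N hN using hNex
  have hfib : ∃ n : ℕ, ¬ {i ∈ S | N i = n}.Countable := by
    by_contra hc
    push_neg at hc
    apply hSnc
    have hU : S = ⋃ n : ℕ, {i ∈ S | N i = n} := by
      ext i; simp only [Set.mem_iUnion, Set.mem_setOf_eq]
      exact ⟨fun hi => ⟨N i, hi, rfl⟩, fun ⟨n, hi, _⟩ => hi⟩
    rw [hU]
    exact Set.countable_iUnion hc
  obtain ⟨N₀, hN₀⟩ := hfib
  refine ⟨{i ∈ S | N i = N₀}, hN₀, ?_⟩
  -- common moduli
  set G : ℕ → ℕ := fun m => (Finset.range (m + 1)).sup g with hGdef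
  have hGmono : Monotone G := fun a b hab =>
    Finset.sup_mono (Finset.range_subset_range.mpr (by omega))
  have hgG : ∀ m, g m ≤ G m := fun m => Finset.le_sup (Finset.self_mem_range_succ m)
  set H : ℕ → ℕ := fun m => m + G m with hHdef
  have hmH : ∀ m, m ≤ H m := fun m => Nat.le_add_right _ _
  have hGH : ∀ m, G m ≤ H m := fun m => Nat.le_add_left _ _
  set sfin : ℝ → Finset ℕ :=
    fun t => (Finset.range (⌈t⌉₊ + 1)).filter (fun m => N₀ ≤ m ∧ (H m : ℝ) ≤ t) with hsdef
  set κ' : ℝ → ℝ := fun t => ((sfin t).sup id : ℕ) with hκ'def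
  set ω' : ℝ → ℝ := fun t => (G (N₀ + ⌈t⌉₊) : ℕ) with hω'def
  have hsub : ∀ a b : ℝ, a ≤ b → sfin a ⊆ sfin b := by
    intro a b hab m hm
    simp only [hsdef, Finset.mem_filter, Finset.mem_range] at hm ⊢
    exact ⟨lt_of_lt_of_le hm.1 (by have := Nat.ceil_mono hab; omega),
      hm.2.1, le_trans hm.2.2 hab⟩
  have hmemsfin : ∀ (t : ℝ) (M : ℕ), N₀ ≤ M → (H M : ℝ) ≤ t → M ∈ sfin t := by
    intro t M h1 h2
    simp only [hsdef, Finset.mem_filter, Finset.mem_range]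
    refine ⟨?_, h1, h2⟩
    have : (M : ℝ) ≤ t := le_trans (by exact_mod_cast hmH M) h2
    have : M ≤ ⌈t⌉₊ := by
      calc M = ⌈(M : ℝ)⌉₊ := (Nat.ceil_natCast M).symm
        _ ≤ ⌈t⌉₊ := Nat.ceil_mono this
    omega
  have hκ'mono : Monotone κ' := by
    intro a b hab
    exact_mod_cast Nat.cast_le.mpr (Finset.sup_mono (hsub a b hab))
  have hω'mono : Monotone ω' := by
    intro a b hab
    exact_mod_cast Nat.cast_le.mpr (hGmono (by have := Nat.ceil_mono hab; omega))
  refine ⟨κ', ω', hκ'mono.monotoneOn _, hω'mono.monotoneOn _,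
    fun t _ => ⟨Nat.cast_nonneg _, Nat.cast_nonneg _⟩, ?_, ?_⟩
  · -- tendsto
    rw [Filter.tendsto_atTop_atTop]
    intro b
    refine ⟨(H (max N₀ ⌈b⌉₊) : ℝ), fun t ht => ?_⟩
    have hMem := hmemsfin t (max N₀ ⌈b⌉₊) (le_max_left _ _) ht
    have : (max N₀ ⌈b⌉₊ : ℕ) ≤ (sfin t).sup id := Finset.le_sup (f := id) hMem
    calc b ≤ (⌈b⌉₊ : ℝ) := Nat.le_ceil b
      _ ≤ ((max N₀ ⌈b⌉₊ : ℕ) : ℝ) := by exact_mod_cast le_max_right _ _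
      _ ≤ κ' t := by simp only [hκ'def]; exact_mod_cast this
  · -- per-space inequalities
    rintro i ⟨hiS, hiN⟩
    refine ⟨f i, fun x y => ?_⟩
    set d := dist x y with hd
    have hd0 : (0 : ℝ) ≤ d := dist_nonneg
    constructor
    · -- lower bound
      rcases (sfin d).eq_empty_or_nonempty with he | hne
      · simp only [hκ'def, he, Finset.sup_empty]
        simpa using dist_nonneg
      · set m₀ := (sfin d).sup id with hm₀
        have hmem : m₀ ∈ sfin d := sup_id_mem_of_nonempty _ hne
        simp only [hsdef, Finset.mem_filter, Finset.mem_range] at hmem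
        obtain ⟨-, hm₀N, hm₀H⟩ := hmem
        have hAH : (A i m₀ : ℝ) ≤ (H m₀ : ℝ) := by
          have h1 : A i m₀ ≤ F i m₀ := le_max_right _ _
          have h2 : F i m₀ < g m₀ := hN i hiS m₀ (hiN ▸ hm₀N)
          exact_mod_cast le_trans h1 (le_trans h2.le (le_trans (hgG m₀) (hGH m₀)))
        have hκchain : (m₀ : ℝ) ≤ κ i d := by
          calc (m₀ : ℝ) ≤ κ i (A i m₀ : ℝ) := hA i m₀
            _ ≤ κ i d := hκm i (Set.mem_Ici.mpr (Nat.cast_nonneg _))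
                (Set.mem_Ici.mpr hd0) (le_trans hAH hm₀H)
        exact le_trans hκchain (hineq i x y).1
    · -- upper bound
      set m := N₀ + ⌈d⌉₊ with hm
      have hdm : d ≤ (m : ℝ) := by
        calc d ≤ (⌈d⌉₊ : ℝ) := Nat.le_ceil d
          _ ≤ (m : ℝ) := by exact_mod_cast Nat.le_add_left _ _
      have hωc : ω i d ≤ ω i (m : ℝ) :=
        hωm i (Set.mem_Ici.mpr hd0) (Set.mem_Ici.mpr (Nat.cast_nonneg _)) hdm
      have hFg : F i m < g m := hN i hiS m (hiN ▸ Nat.le_add_right _ _)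
      calc dist (f i x) (f i y) ≤ ω i d := (hineq i x y).2
        _ ≤ ω i (m : ℝ) := hωc
        _ ≤ (⌈ω i (m : ℝ)⌉₊ : ℝ) := Nat.le_ceil _
        _ ≤ (F i m : ℝ) := by exact_mod_cast le_max_left _ _
        _ ≤ (g m : ℝ) := by exact_mod_cast hFg.le
        _ ≤ ω' d := by
          show (g m : ℝ) ≤ ((G (N₀ + ⌈d⌉₊) : ℕ) : ℝ)
          rw [← hm]; exact_mod_cast hgG m
end

section
/- Let (e_n) be the standard unit vector basis of c₀, let E be a metric space, and let α < ω₁. If Z[S_α]_{c₀} coarsely embeds into E, then there exists a map f : S_α → Coa(ℤ,(e_n),E) such that A ≺* B implies f(A) < f(B) for all A, B ∈ S_α; in particular, if the relation < is well-founded on Coa(ℤ,(e_n),E), then rk(Coa(ℤ,(e_n),E), <) ≥ ω^α + 1. -/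
open Filter Set Topology
open scoped ENNReal

/-! ### Auxiliary lemmas -/

section Aux

lemma tminus_nonneg {t : ℝ} (ht : 0 < t) : 0 ≤ tminus t := by
  unfold tminus
  split_ifs with h
  · have : (1 : ℤ) ≤ ⌊t⌋ := Int.le_floor.mpr (by exact_mod_cast h)
    positivity
  · positivity

lemma tminus_le {t : ℝ} (ht : 0 < t) : tminus t ≤ t := by
  unfold tminus
  split_ifs with h
  · exact Int.floor_le t
  · push_neg at h
    have h1 : (1 : ℝ) < 1 / t := one_lt_one_div ht h
    have h2 : (0 : ℝ) < 1 / t := by positivity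
    have h3 : 1 / t ≤ (⌈1 / t⌉ : ℝ) := Int.le_ceil _
    have h4 : (0 : ℝ) < (⌈1 / t⌉ : ℝ) := lt_of_lt_of_le h2 h3
    calc 1 / (⌈1 / t⌉ : ℝ) ≤ 1 / (1 / t) := one_div_le_one_div_of_le h2 h3
      _ = t := one_div_one_div t

lemma le_tplus {t : ℝ} (ht : 0 < t) : t ≤ tplus t := by
  unfold tplus
  split_ifs with h
  · exact Int.le_ceil t
  · push_neg at h
    have h1 : (1 : ℝ) < 1 / t := one_lt_one_div ht h
    have h2 : (1 : ℤ) ≤ ⌊1 / t⌋ := Int.le_floor.mpr (by exact_mod_cast h1.le)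
    have h4 : (0 : ℝ) < (⌊1 / t⌋ : ℝ) := by exact_mod_cast h2
    have h3 : (⌊1 / t⌋ : ℝ) ≤ 1 / t := Int.floor_le _
    calc t = 1 / (1 / t) := (one_div_one_div t).symm
      _ ≤ 1 / (⌊1 / t⌋ : ℝ) := one_div_le_one_div_of_le h4 h3

lemma tplus_nonneg {t : ℝ} (ht : 0 < t) : 0 ≤ tplus t :=
  le_trans ht.le (le_tplus ht)

lemma Zset_nonneg {r : ℝ} (hr : r ∈ Zset) : 0 ≤ r := by
  obtain ⟨n, hn, rfl | rfl⟩ := hr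
  · positivity
  · positivity

lemma Schreier_zero (lseq : Ordinal → ℕ → Ordinal) :
    Schreier lseq 0 = ({A | ∃ n : ℕ, 1 ≤ n ∧ A = {n}} ∪ {∅}) := by
  unfold Schreier
  exact Ordinal.limitRecOn_zero _ _ _

lemma Schreier_succ (lseq : Ordinal → ℕ → Ordinal) (o : Ordinal) :
    Schreier lseq (Order.succ o) = {A | ∃ n : ℕ, 1 ≤ n ∧ ∃ f : ℕ → Finset ℕ,
      (∀ i < n, f i ∈ Schreier lseq o) ∧ natLE n (f 0) ∧
      (∀ i j : ℕ, i < j → j < n → finLT (f i) (f j)) ∧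
      A = (Finset.range n).biUnion f} := by
  unfold Schreier
  exact Ordinal.limitRecOn_succ _ _ _ _

lemma Schreier_limit (lseq : Ordinal → ℕ → Ordinal) {o : Ordinal} (ho : Order.IsSuccLimit o) :
    Schreier lseq o = {A | ∃ n : ℕ, natLE (n + 1) A ∧
      ∃ h : lseq o n < o, A ∈ Schreier lseq (lseq o n)} := by
  unfold Schreier
  rw [Ordinal.limitRecOn_limit _ _ _ _ ho]

lemma schreier_empty (lseq : Ordinal → ℕ → Ordinal) (hseq : IsFundSeq lseq) :
    ∀ α : Ordinal, α < (Cardinal.aleph 1).ord → (∅ : Finset ℕ) ∈ Schreier lseq α := by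
  intro α
  induction α using Ordinal.limitRecOn with
  | zero =>
    intro _
    rw [Schreier_zero]
    exact Or.inr rfl
  | add_one o IH =>
    rw [Ordinal.add_one_eq_succ]
    intro hα
    rw [Schreier_succ]
    refine ⟨1, le_rfl, fun _ => ∅, fun i _ => IH (lt_trans (Order.lt_succ o) hα), ?_, ?_, ?_⟩
    · intro a ha; exact absurd ha (Finset.notMem_empty a)
    · intro i j hij hj1; intro a ha; exact absurd ha (Finset.notMem_empty a)
    · simp
  | limit o ho IH =>
    intro hα
    rw [Schreier_limit lseq ho]
    obtain ⟨_, hlt, _⟩ := hseq o ho hα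
    exact ⟨0, fun a ha => absurd ha (Finset.notMem_empty a), hlt 0,
      IH _ (hlt 0) (lt_trans (hlt 0) hα)⟩

lemma schreier_main (lseq : Ordinal → ℕ → Ordinal) (hseq : IsFundSeq lseq) :
    ∀ α : Ordinal, α < (Cardinal.aleph 1).ord → ∀ n : ℕ, 1 ≤ n →
    ∀ g : Finset ℕ → Ordinal, ∀ δ : Ordinal,
    (∀ B : Finset ℕ, ∀ m : ℕ, B ∈ Schreier lseq α → natLE n B → (∀ b ∈ B, b < m) → n ≤ m →
        insert m B ∈ Schreier lseq α → g (insert m B) + 1 ≤ g B) →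
    (∀ A : Finset ℕ, A ∈ Schreier lseq α → natLE n A → δ ≤ g A) →
    δ + Ordinal.omega0 ^ α ≤ g ∅ := by
  intro α
  induction α using Ordinal.limitRecOn with
  | zero =>
    intro _ n hn g δ Hch Hlf
    rw [Ordinal.opow_zero]
    have h0 : (∅ : Finset ℕ) ∈ Schreier lseq 0 := by
      rw [Schreier_zero]; exact Or.inr rfl
    have hsing : ({n} : Finset ℕ) ∈ Schreier lseq 0 := by
      rw [Schreier_zero]; exact Or.inl ⟨n, hn, rfl⟩
    have h1 := Hch ∅ n h0 (fun a ha => absurd ha (Finset.notMem_empty a))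
      (fun b hb => absurd hb (Finset.notMem_empty b)) le_rfl
      (by rw [Finset.insert_empty]; exact hsing)
    have h2 := Hlf {n} hsing (fun a ha => by rw [Finset.mem_singleton] at ha; omega)
    rw [Finset.insert_empty] at h1
    calc δ + 1 ≤ g {n} + 1 := add_le_add_left h2 1
      _ ≤ g ∅ := h1
  | add_one o IH =>
    rw [Ordinal.add_one_eq_succ]
    intro hα n hn g δ Hch Hlf
    have ho1 : o < (Cardinal.aleph 1).ord := lt_trans (Order.lt_succ o) hα
    have hS := Schreier_succ lseq o
    have hemp : (∅ : Finset ℕ) ∈ Schreier lseq o := schreier_empty lseq hseq o ho1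
    have hempS : (∅ : Finset ℕ) ∈ Schreier lseq (Order.succ o) :=
      schreier_empty lseq hseq _ hα
    have key : ∀ K : ℕ, n ≤ K → δ + Ordinal.omega0 ^ o * K ≤ g ∅ := by
      intro K hKn
      have hK1 : 1 ≤ K := le_trans hn hKn
      have T : ∀ d : ℕ, ∀ j : ℕ, j + d = K → ∀ f : ℕ → Finset ℕ,
          (∀ i, f i ∈ Schreier lseq o) → (∀ i, natLE K (f i)) →
          (∀ i i', i < i' → finLT (f i) (f i')) → (∀ i, j ≤ i → f i = ∅) →
          δ + Ordinal.omega0 ^ o * d ≤ g ((Finset.range j).biUnion f) := by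
        intro d
        induction d with
        | zero =>
          intro j hj f hfS hfK hflt hfe
          have hj' : j = K := by omega
          subst hj'
          have hmem : (Finset.range j).biUnion f ∈ Schreier lseq (Order.succ o) := by
            rw [hS]
            exact ⟨j, hK1, f, fun i _ => hfS i, hfK 0,
              fun i i' hii' _ => hflt i i' hii', rfl⟩
          have hle := Hlf _ hmem (fun a ha => by
            rcases Finset.mem_biUnion.mp ha with ⟨i, _, hai⟩
            exact le_trans hKn (hfK i a hai))
          simpa using hle
        | succ d IHd =>
          intro j hj f hfS hfK hflt hfe
          set P := (Finset.range j).biUnion f with hP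
          set N := K + P.sup id + 1 with hNdef
          have hPN : ∀ a ∈ P, a < N := by
            intro a ha
            have := Finset.le_sup (f := id) ha
            simp only [id] at this
            omega
          have hPK : ∀ a ∈ P, K ≤ a := fun a ha => by
            rcases Finset.mem_biUnion.mp ha with ⟨i, _, hai⟩
            exact hfK i a hai
          have hNK : K ≤ N := by omega
          have hjK : j < K := by omega
          -- key facts about updates of `f` at `j`
          have hpair : ∀ B : Finset ℕ, (∀ b ∈ B, N ≤ b) →
              ∀ i i', i < i' → finLT (Function.update f j B i) (Function.update f j B i') := by
            intro B hNB i i' hii' a ha b hb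
            rcases eq_or_ne i j with rfl | hij
            · rw [Function.update_of_ne (by omega : i' ≠ i), hfe i' (by omega)] at hb
              exact absurd hb (Finset.notMem_empty b)
            · rw [Function.update_of_ne hij] at ha
              rcases eq_or_ne i' j with rfl | hij'
              · rw [Function.update_self] at hb
                by_cases hilt : i < i'
                · have haP : a ∈ P :=
                    Finset.mem_biUnion.mpr ⟨i, Finset.mem_range.mpr hilt, ha⟩
                  exact lt_of_lt_of_le (hPN a haP) (hNB b hb)
                · rw [hfe i (by omega)] at ha
                  exact absurd ha (Finset.notMem_empty a)
              · rw [Function.update_of_ne hij'] at hb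
                exact hflt i i' hii' a ha b hb
          have hupdS : ∀ B : Finset ℕ, B ∈ Schreier lseq o →
              ∀ i, Function.update f j B i ∈ Schreier lseq o := by
            intro B hB i
            rcases eq_or_ne i j with rfl | hij
            · rw [Function.update_self]; exact hB
            · rw [Function.update_of_ne hij]; exact hfS i
          have hupd0 : ∀ B : Finset ℕ, (∀ b ∈ B, N ≤ b) →
              natLE K (Function.update f j B 0) := by
            intro B hNB a ha
            rcases eq_or_ne j 0 with rfl | h0
            · rw [Function.update_self] at ha
              exact le_trans hNK (hNB a ha)
            · rw [Function.update_of_ne (Ne.symm h0)] at ha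
              exact hfK 0 a ha
          have hUeq : ∀ B : Finset ℕ,
              (Finset.range K).biUnion (Function.update f j B) = P ∪ B := by
            intro B
            ext a
            simp only [Finset.mem_union, Finset.mem_biUnion, Finset.mem_range, hP]
            constructor
            · rintro ⟨i, hiK, hai⟩
              rcases eq_or_ne i j with rfl | hij
              · rw [Function.update_self] at hai; exact Or.inr hai
              · rw [Function.update_of_ne hij] at hai
                by_cases hilt : i < j
                · exact Or.inl ⟨i, hilt, hai⟩
                · rw [hfe i (by omega)] at hai
                  exact absurd hai (Finset.notMem_empty a)
            · rintro (⟨i, hij', hai⟩ | haB)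
              · exact ⟨i, by omega, by
                  rw [Function.update_of_ne (by omega : i ≠ j)]; exact hai⟩
              · exact ⟨j, hjK, by rw [Function.update_self]; exact haB⟩
          have hins : ∀ B : Finset ℕ, B ∈ Schreier lseq o → (∀ b ∈ B, N ≤ b) →
              P ∪ B ∈ Schreier lseq (Order.succ o) := by
            intro B hB hNB
            rw [hS]
            exact ⟨K, hK1, Function.update f j B, fun i _ => hupdS B hB i,
              hupd0 B hNB, fun i i' hii' _ => hpair B hNB i i' hii', (hUeq B).symm⟩
          have hstep := IH ho1 N (by omega) (fun A => g (P ∪ A))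
              (δ + Ordinal.omega0 ^ o * d) ?_ ?_
          · simp only [Finset.union_empty] at hstep
            calc δ + Ordinal.omega0 ^ o * (d + 1 : ℕ)
                = δ + Ordinal.omega0 ^ o * d + Ordinal.omega0 ^ o := by
                  rw [Nat.cast_succ, mul_add, mul_one, add_assoc]
              _ ≤ g P := hstep
          · -- child condition for the inner application
            intro B m₀ hB hNB hbm hNm hinsB
            have h1 : P ∪ B ∈ Schreier lseq (Order.succ o) := hins B hB hNB
            have h2 : insert m₀ (P ∪ B) ∈ Schreier lseq (Order.succ o) := by
              rw [← Finset.union_insert]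
              refine hins _ hinsB ?_
              intro b hb
              rcases Finset.mem_insert.mp hb with rfl | hbB
              · exact hNm
              · exact hNB b hbB
            have h3 := Hch (P ∪ B) m₀ h1
              (fun a ha => by
                rcases Finset.mem_union.mp ha with haP | haB
                · exact le_trans hKn (hPK a haP)
                · exact le_trans (le_trans hKn hNK) (hNB a haB))
              (fun b hb => by
                rcases Finset.mem_union.mp hb with hbP | hbB
                · exact lt_of_lt_of_le (hPN b hbP) hNm
                · exact hbm b hbB)
              (le_trans (le_trans hKn hNK) hNm) h2
            show g (P ∪ insert m₀ B) + 1 ≤ g (P ∪ B)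
            rw [Finset.union_insert]
            exact h3
          · -- leaf condition for the inner application
            intro A hA hNA
            have hres := IHd (j + 1) (by omega) (Function.update f j A)
              (hupdS A hA)
              (fun i a ha => by
                rcases eq_or_ne i j with rfl | hij
                · rw [Function.update_self] at ha
                  exact le_trans hNK (hNA a ha)
                · rw [Function.update_of_ne hij] at ha
                  exact hfK i a ha)
              (hpair A hNA)
              (fun i hi => by
                rw [Function.update_of_ne (by omega : i ≠ j)]
                exact hfe i (by omega))
            have heq : (Finset.range (j + 1)).biUnion (Function.update f j A) = P ∪ A := by
              rw [Finset.range_add_one, Finset.biUnion_insert, Function.update_self]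
              have hrest : (Finset.range j).biUnion (Function.update f j A) = P := by
                refine Finset.biUnion_congr rfl (fun i hi => ?_)
                rw [Finset.mem_range] at hi
                exact Function.update_of_ne (by omega) _ _
              rw [hrest, Finset.union_comm]
            rw [heq] at hres
            exact hres
      have hbase := T K 0 (by omega) (fun _ => ∅) (fun _ => hemp)
        (fun i a ha => absurd ha (Finset.notMem_empty a))
        (fun i i' _ a ha => absurd ha (Finset.notMem_empty a))
        (fun i _ => rfl)
      simpa using hbase
    -- conclude the successor case
    rw [Ordinal.opow_succ]
    apply le_of_forall_lt
    intro c hc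
    rcases lt_or_ge c δ with hcδ | hδc
    · exact lt_of_lt_of_le hcδ
        (Hlf ∅ hempS (fun a ha => absurd ha (Finset.notMem_empty a)))
    · rw [← Ordinal.add_sub_cancel_of_le hδc] at hc ⊢
      have hdlt : c - δ < Ordinal.omega0 ^ o * Ordinal.omega0 :=
        (add_lt_add_iff_left δ).mp hc
      obtain ⟨c', hc'ω, hdc'⟩ := (Ordinal.lt_mul_iff_of_isSuccLimit Ordinal.isSuccLimit_omega0).mp hdlt
      obtain ⟨k, rfl⟩ := Ordinal.lt_omega0.mp hc'ω
      have hkK : ((k : ℕ) : Ordinal) ≤ ((max n k : ℕ) : Ordinal) := by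
        exact_mod_cast le_max_right n k
      have hfin : c - δ < Ordinal.omega0 ^ o * ((max n k : ℕ) : Ordinal) :=
        lt_of_lt_of_le hdc' (mul_le_mul_right hkK _)
      exact lt_of_lt_of_le ((add_lt_add_iff_left δ).mpr hfin) (key (max n k) (le_max_left n k))
  | limit o ho IH =>
    intro hα n hn g δ Hch Hlf
    obtain ⟨hmono, hlt, hsup⟩ := hseq o ho hα
    have hSo := Schreier_limit lseq ho
    have hsub : ∀ m : ℕ, ∀ A : Finset ℕ, A ∈ Schreier lseq (lseq o m) →
        (∀ a ∈ A, m + 1 ≤ a) → A ∈ Schreier lseq o := by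
      intro m A hA hm1
      rw [hSo]
      exact ⟨m, hm1, hlt m, hA⟩
    have key : ∀ m : ℕ, δ + Ordinal.omega0 ^ (lseq o m) ≤ g ∅ := by
      intro m
      refine IH (lseq o m) (hlt m) (lt_trans (hlt m) hα) (max n (m + 1))
        (le_trans hn (le_max_left _ _)) g δ ?_ ?_
      · intro B m₀ hB hnB hbm hn'm hins
        refine Hch B m₀
          (hsub m B hB (fun a ha => le_trans (le_max_right _ _) (hnB a ha)))
          (fun a ha => le_trans (le_max_left _ _) (hnB a ha)) hbm
          (le_trans (le_max_left _ _) hn'm)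
          (hsub m _ hins ?_)
        intro a ha
        rcases Finset.mem_insert.mp ha with rfl | haB
        · exact le_trans (le_max_right _ _) hn'm
        · exact le_trans (le_max_right _ _) (hnB a haB)
      · intro A hA hnA
        exact Hlf A (hsub m A hA (fun a ha => le_trans (le_max_right _ _) (hnA a ha)))
          (fun a ha => le_trans (le_max_left _ _) (hnA a ha))
    apply le_of_forall_lt
    intro c hc
    rcases lt_or_ge c δ with hcδ | hδc
    · exact lt_of_lt_of_le hcδ
        (Hlf ∅ (schreier_empty lseq hseq o hα)
          (fun a ha => absurd ha (Finset.notMem_empty a)))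
    · rw [← Ordinal.add_sub_cancel_of_le hδc] at hc ⊢
      have hdlt : c - δ < Ordinal.omega0 ^ o := (add_lt_add_iff_left δ).mp hc
      obtain ⟨c', hc'o, hdc'⟩ :=
        (Ordinal.lt_opow_of_isSuccLimit Ordinal.omega0_ne_zero ho).mp hdlt
      have hc'sup : c' < ⨆ m, lseq o m := by rw [hsup]; exact hc'o
      obtain ⟨m, hm⟩ := Ordinal.lt_iSup_iff.mp hc'sup
      have hfin : c - δ < Ordinal.omega0 ^ (lseq o m) :=
        lt_of_lt_of_le hdc' (Ordinal.opow_le_opow_right Ordinal.omega0_pos hm.le)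
      exact lt_of_lt_of_le ((add_lt_add_iff_left δ).mpr hfin) (key m)

end Aux

theorem stmt19 {E : Type*} [MetricSpace E]
    (lseq : Ordinal → ℕ → Ordinal) (hseq : IsFundSeq lseq)
    (α : Ordinal) (hα : α < (Cardinal.aleph 1).ord)
    (h : ∃ f : ↥(ZSchreierSet lseq α) → E, CoarseEmbeddingMap f) :
    (∃ F : ↥(Schreier lseq α) → QuadF c0 E,
      (∀ A, F A ∈ CoaTheta (E := E) ZR stdBasis) ∧
      ∀ A B : ↥(Schreier lseq α), PrecStar A.1 B.1 →
        QuadFRel ZR stdBasis (F A) (F B)) ∧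
    ∀ hwf : WellFounded fun p q : ↥(CoaTheta (E := E) ZR stdBasis) =>
        QuadFRel ZR stdBasis p.1 q.1,
      Ordinal.omega0 ^ α + 1 ≤
        relRankOn (QuadFRel ZR stdBasis) (CoaTheta (E := E) ZR stdBasis) hwf := by
  classical
  obtain ⟨f, κ, ω, hκm, hωm, hnn, hκtop, hfb⟩ := h
  have h0Z : (0 : c0) ∈ ZSchreierSet lseq α :=
    ⟨∅, schreier_empty lseq hseq α hα, 0, by simp⟩
  set φ : c0 → E := fun x =>
    if hx : x ∈ ZSchreierSet lseq α then f ⟨x, hx⟩ else f ⟨0, h0Z⟩ with hφdef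
  set κ' : ℝ → ℝ≥0∞ := fun r => ENNReal.ofReal (κ r) with hκ'def
  set ω' : ℝ → ℝ≥0∞ := fun r => ENNReal.ofReal (ω r) with hω'def
  have hRC : ∀ A : Finset ℕ, A ∈ Schreier lseq α →
      ∀ x ∈ RComb ZR stdBasis A, x ∈ ZSchreierSet lseq α := by
    rintro A hA x ⟨c, hc, rfl⟩
    refine ⟨A, hA, fun i => (hc i).choose, ?_⟩
    exact Finset.sum_congr rfl fun i _ => by rw [(hc i).choose_spec]
  have hFmem : ∀ (A : Finset ℕ), A ∈ Schreier lseq α →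
      (⟨κ', ω', A, φ⟩ : QuadF c0 E) ∈ CoaTheta (E := E) ZR stdBasis := by
    intro A hA
    refine ⟨⟨?_, ?_, ?_⟩, ?_, ?_⟩
    · -- Nmod κ'
      intro r hr s hs hrs
      exact ENNReal.ofReal_le_ofReal (hκm (Zset_nonneg hr) (Zset_nonneg hs) hrs)
    · intro r hr s hs hrs
      exact ENNReal.ofReal_le_ofReal (hωm (Zset_nonneg hr) (Zset_nonneg hs) hrs)
    · -- embedding estimates
      intro x hx y hy hxy
      have hxZ := hRC A hA x hx
      have hyZ := hRC A hA y hy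
      have hd : 0 < dist x y := dist_pos.mpr hxy
      have hφx : φ x = f ⟨x, hxZ⟩ := dif_pos hxZ
      have hφy : φ y = f ⟨y, hyZ⟩ := dif_pos hyZ
      have hdist : dist (⟨x, hxZ⟩ : ↥(ZSchreierSet lseq α)) ⟨y, hyZ⟩ = dist x y :=
        Subtype.dist_eq _ _
      obtain ⟨hlow, hupp⟩ := hfb ⟨x, hxZ⟩ ⟨y, hyZ⟩
      rw [hdist] at hlow hupp
      constructor
      · show ENNReal.ofReal (κ (tminus (dist x y))) ≤ edist (φ x) (φ y)
        rw [edist_dist, hφx, hφy]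
        refine ENNReal.ofReal_le_ofReal (le_trans ?_ hlow)
        exact hκm (Set.mem_Ici.mpr (tminus_nonneg hd)) (Set.mem_Ici.mpr hd.le)
          (tminus_le hd)
      · show edist (φ x) (φ y) ≤ ENNReal.ofReal (ω (tplus (dist x y)))
        rw [edist_dist, hφx, hφy]
        refine ENNReal.ofReal_le_ofReal (le_trans hupp ?_)
        exact hωm (Set.mem_Ici.mpr hd.le) (Set.mem_Ici.mpr (tplus_nonneg hd))
          (le_tplus hd)
    · -- `ω'` finite on `Zset`
      intro r _
      exact ENNReal.ofReal_lt_top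
    · -- `κ'` tends to `⊤`
      show Filter.Tendsto (fun n : ℕ => ENNReal.ofReal (κ (n : ℝ))) Filter.atTop (nhds ⊤)
      exact ENNReal.tendsto_ofReal_atTop.comp
        (hκtop.comp tendsto_natCast_atTop_atTop)
  refine ⟨⟨fun A => ⟨κ', ω', A.1, φ⟩, fun A => hFmem A.1 A.2, ?_⟩, ?_⟩
  · rintro A B ⟨m, hm, hins⟩
    exact ⟨rfl, rfl, ⟨m, hm, hins⟩, fun x _ => rfl⟩
  · intro hwf
    set g : Finset ℕ → Ordinal := fun A =>
      if hA : A ∈ Schreier lseq α then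
        (hwf.apply (⟨⟨κ', ω', A, φ⟩, hFmem A hA⟩ : ↥(CoaTheta (E := E) ZR stdBasis))).rank
      else 0 with hgdef
    have Hch : ∀ B : Finset ℕ, ∀ m : ℕ, B ∈ Schreier lseq α → natLE 1 B →
        (∀ b ∈ B, b < m) → 1 ≤ m → insert m B ∈ Schreier lseq α →
        g (insert m B) + 1 ≤ g B := by
      intro B m hB _ hbm _ hins
      have hrel : QuadFRel ZR stdBasis (⟨κ', ω', insert m B, φ⟩ : QuadF c0 E)
          ⟨κ', ω', B, φ⟩ := ⟨rfl, rfl, ⟨m, hbm, rfl⟩, fun x _ => rfl⟩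
      have hlt := Acc.rank_lt_of_rel
        (hwf.apply (⟨⟨κ', ω', B, φ⟩, hFmem B hB⟩ : ↥(CoaTheta (E := E) ZR stdBasis)))
        (a := ⟨⟨κ', ω', insert m B, φ⟩, hFmem _ hins⟩) hrel
      rw [hgdef]
      simp only [dif_pos hins, dif_pos hB]
      rw [Ordinal.add_one_eq_succ, Order.succ_le_iff]
      exact lt_of_eq_of_lt (congrArg Acc.rank (Subsingleton.elim _ _)) hlt
    have Hlf : ∀ A : Finset ℕ, A ∈ Schreier lseq α → natLE 1 A → (0 : Ordinal) ≤ g A :=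
      fun _ _ _ => zero_le
    have hmain := schreier_main lseq hseq α hα 1 le_rfl g 0 Hch Hlf
    rw [zero_add] at hmain
    have hES : (∅ : Finset ℕ) ∈ Schreier lseq α := schreier_empty lseq hseq α hα
    have hgES : g ∅ =
        (hwf.apply (⟨⟨κ', ω', ∅, φ⟩, hFmem ∅ hES⟩ :
          ↥(CoaTheta (E := E) ZR stdBasis))).rank := by
      rw [hgdef]; simp only [dif_pos hES]
    rw [hgES] at hmain
    calc Ordinal.omega0 ^ α + 1
        ≤ (hwf.apply (⟨⟨κ', ω', ∅, φ⟩, hFmem ∅ hES⟩ :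
            ↥(CoaTheta (E := E) ZR stdBasis))).rank + 1 := add_le_add_left hmain 1
      _ = Order.succ _ := Ordinal.add_one_eq_succ _
      _ ≤ relRankOn (QuadFRel ZR stdBasis) (CoaTheta (E := E) ZR stdBasis) hwf :=
          Ordinal.le_iSup (fun a => Order.succ (hwf.apply a).rank) _
end
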